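/- arXiv:2309.02990 — 5 statements merged into one kernel-verified Lean document; each statement's English description precedes it below -/
import Mathlib

section
/- Let p = (c/n)^a for constants c > 0 and a ∈ (0,1], and let N be the number of maximal cliques in G(n,p). Then E[N] = O(n^x) where x = ⌈1/a⌉ - a * binomial(⌈1/a⌉, 2). In particular, for a = 1 (i.e. p = c/n), E[N] = O(n). -/
open MeasureTheory Filter Finset
open scoped ENNReal Classical Topology

noncomputable section

/-- The Erdős–Rényi graph determined by edge indicators `f`. -/
def erGraph (n : ℕ) (f : Sym2 (Fin n) → Bool) : SimpleGraph (Fin n) :=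
  SimpleGraph.fromRel fun u v => f s(u, v) = true

/-- Product Bernoulli measure on edge indicators: each edge present independently
with probability `p`. -/
def erMeasure (n : ℕ) (p : ℝ≥0∞) (hp : p ≤ 1) :
    Measure (Sym2 (Fin n) → Bool) :=
  Measure.pi fun _ => (PMF.bernoulli p.toNNReal (by simpa using ENNReal.toNNReal_mono ENNReal.one_ne_top hp)).toMeasure

/-- A maximal clique: a clique not contained in any larger clique. -/
def IsMaxClique {V : Type*} (G : SimpleGraph V) (s : Finset V) : Prop :=
  G.IsClique ↑s ∧ ∀ t : Finset V, G.IsClique ↑t → s ⊆ t → s = t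

/-- Number of maximal cliques. -/
def maxCliqueCount (n : ℕ) (f : Sym2 (Fin n) → Bool) : ℕ :=
  Nat.card {s : Finset (Fin n) // IsMaxClique (erGraph n f) s}

/-- Number of maximal cliques of size `k`. -/
def maxCliqueCountOfSize (n k : ℕ) (f : Sym2 (Fin n) → Bool) : ℕ :=
  Nat.card {s : Finset (Fin n) // s.card = k ∧ IsMaxClique (erGraph n f) s}


lemma filter_eq_image (n : ℕ) (s : Finset (Fin n)) :
    (univ.filter fun e : Sym2 (Fin n) => ¬e.IsDiag ∧ ∀ x ∈ e, x ∈ s)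
      = s.offDiag.image Sym2.mk.uncurry := by
  ext z
  induction z with
  | _ x y =>
    simp only [mem_filter, mem_univ, true_and, Sym2.mk_isDiag_iff, Sym2.mem_iff,
      mem_image, Finset.mem_offDiag, Prod.exists, Function.uncurry_apply_pair]
    constructor
    · rintro ⟨hxy, h⟩
      exact ⟨x, y, ⟨h x (Or.inl rfl), h y (Or.inr rfl), hxy⟩, rfl⟩
    · rintro ⟨a, b, ⟨ha, hb, hab⟩, h⟩
      rw [Sym2.eq_iff] at h
      rcases h with ⟨rfl, rfl⟩ | ⟨rfl, rfl⟩
      · exact ⟨hab, by rintro u (rfl | rfl) <;> assumption⟩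
      · exact ⟨fun h => hab h.symm, by rintro u (rfl | rfl) <;> assumption⟩

lemma measure_clique_le (n : ℕ) (p : ℝ≥0∞) (hp : p ≤ 1) (s : Finset (Fin n)) :
    erMeasure n p hp {f | (erGraph n f).IsClique ↑s} ≤ p ^ (s.card.choose 2) := by
  classical
  set S : Sym2 (Fin n) → Set Bool := fun e =>
    if (¬e.IsDiag ∧ ∀ x ∈ e, x ∈ s) then {true} else Set.univ with hS
  have hsub : {f : Sym2 (Fin n) → Bool | (erGraph n f).IsClique ↑s} ⊆ Set.univ.pi S := by
    intro f hf
    intro e _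
    rw [hS]
    dsimp only
    split_ifs with h
    · induction e with
      | _ x y =>
        obtain ⟨hd, hm⟩ := h
        rw [Sym2.mk_isDiag_iff] at hd
        have hx : x ∈ s := hm x (by simp)
        have hy : y ∈ s := hm y (by simp)
        have := hf hx hy hd
        rw [erGraph, SimpleGraph.fromRel_adj] at this
        rcases this.2 with h' | h'
        · exact h'
        · rw [Sym2.eq_swap] at h'; exact h'
    · trivial
  calc erMeasure n p hp {f | (erGraph n f).IsClique ↑s}
      ≤ erMeasure n p hp (Set.univ.pi S) := measure_mono hsub
    _ = ∏ e : Sym2 (Fin n), (PMF.bernoulli p.toNNReal (by simpa using ENNReal.toNNReal_mono ENNReal.one_ne_top hp)).toMeasure (S e) := Measure.pi_pi _ _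
    _ = p ^ (s.card.choose 2) := by
        have hval : ∀ e : Sym2 (Fin n), (PMF.bernoulli p.toNNReal (by simpa using ENNReal.toNNReal_mono ENNReal.one_ne_top hp)).toMeasure (S e)
            = if (¬e.IsDiag ∧ ∀ x ∈ e, x ∈ s) then p else 1 := by
          intro e
          rw [hS]
          dsimp only
          split_ifs with h
          · rw [PMF.toMeasure_apply_singleton _ _ (measurableSet_singleton _)]
            exact (PMF.bernoulli_apply _ true).trans <| ENNReal.coe_toNNReal (ne_top_of_le_ne_top ENNReal.one_ne_top hp)
          · have : ((PMF.bernoulli p.toNNReal (by simpa using ENNReal.toNNReal_mono ENNReal.one_ne_top hp)).toMeasure : Measure Bool) Set.univ = 1 := measure_univ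
            simpa using this
        rw [Finset.prod_congr rfl fun e _ => hval e, Finset.prod_ite, Finset.prod_const,
          Finset.prod_const, one_pow, mul_one, filter_eq_image, Sym2.card_image_offDiag]

lemma exp_le (n : ℕ) (p : ℝ≥0∞) (hp : p ≤ 1) :
    ∫ f, (maxCliqueCount n f : ℝ) ∂ erMeasure n p hp
      ≤ ∑ k ∈ range (n + 1), (n.choose k : ℝ) * p.toReal ^ (k.choose 2) := by
  classical
  haveI : IsProbabilityMeasure (erMeasure n p hp) := by unfold erMeasure; infer_instance
  have hcount : ∀ f, (maxCliqueCount n f : ℝ)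
      = ∑ s : Finset (Fin n), if IsMaxClique (erGraph n f) s then (1 : ℝ) else 0 := by
    intro f
    rw [maxCliqueCount, Nat.card_eq_fintype_card, Fintype.card_subtype, Finset.card_filter]
    push_cast
    rfl
  calc ∫ f, (maxCliqueCount n f : ℝ) ∂ erMeasure n p hp
      = ∑ s : Finset (Fin n), ∫ f, (if IsMaxClique (erGraph n f) s then (1:ℝ) else 0)
          ∂ erMeasure n p hp := by
        rw [← integral_finset_sum]
        · exact integral_congr_ae (Filter.Eventually.of_forall fun f => hcount f)
        · exact fun s _ => Integrable.of_finite
    _ ≤ ∑ s : Finset (Fin n), p.toReal ^ (s.card.choose 2) := by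
        apply Finset.sum_le_sum
        intro s _
        have heq : (fun f => if IsMaxClique (erGraph n f) s then (1:ℝ) else 0)
            = Set.indicator {f | IsMaxClique (erGraph n f) s} (fun _ => (1:ℝ)) := by
          ext f
          by_cases h : IsMaxClique (erGraph n f) s <;>
            simp [Set.indicator_apply, h]
        rw [heq, integral_indicator_const (1:ℝ) MeasurableSet.of_discrete, smul_eq_mul, mul_one]
        have hmono : erMeasure n p hp {f | IsMaxClique (erGraph n f) s}
            ≤ p ^ (s.card.choose 2) := by
          refine le_trans (measure_mono ?_) (measure_clique_le n p hp s)
          intro f hf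
          exact hf.1
        have hne : p ^ (s.card.choose 2) ≠ ⊤ := by
          exact ENNReal.pow_ne_top (hp.trans_lt (by norm_num)).ne
        calc (erMeasure n p hp {f | IsMaxClique (erGraph n f) s}).toReal
            ≤ (p ^ (s.card.choose 2)).toReal := ENNReal.toReal_mono hne hmono
          _ = p.toReal ^ (s.card.choose 2) := ENNReal.toReal_pow _ _
    _ = ∑ k ∈ range (n + 1), (n.choose k : ℝ) * p.toReal ^ (k.choose 2) := by
        have := Finset.sum_powerset_apply_card (fun k => p.toReal ^ (k.choose 2))
          (x := (univ : Finset (Fin n)))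
        rw [Finset.powerset_univ] at this
        rw [this]
        simp [Finset.card_univ, nsmul_eq_mul]

lemma g_succ (a : ℝ) (k : ℕ) :
    ((k+1 : ℕ) : ℝ) - a * ((k+1).choose 2 : ℕ) = ((k:ℝ) - a * (k.choose 2 : ℕ)) + (1 - a * k) := by
  have h : (k+1).choose 2 = k.choose 2 + k := by
    rw [Nat.choose_succ_succ]
    simp [Nat.choose_one_right, Nat.add_comm]
  rw [h]
  push_cast
  ring

lemma g_le (a : ℝ) (ha0 : 0 < a) (K : ℕ) (hK : 1 ≤ a * K) (hK' : a * ((K:ℝ) - 1) ≤ 1) :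
    ∀ k : ℕ, (k:ℝ) - a * (k.choose 2 : ℕ) ≤ (K:ℝ) - a * (K.choose 2 : ℕ) := by
  have hup : ∀ k, K ≤ k → (k:ℝ) - a * (k.choose 2 : ℕ) ≤ (K:ℝ) - a * (K.choose 2 : ℕ) := by
    intro k hk
    induction k, hk using Nat.le_induction with
    | base => exact le_rfl
    | succ k hk ih =>
      have h1 : a * K ≤ a * k := by
        exact mul_le_mul_of_nonneg_left (by exact_mod_cast hk) ha0.le
      have := g_succ a k
      push_cast at this ⊢
      nlinarith
  have hdown : ∀ d : ℕ, ((K - d : ℕ):ℝ) - a * ((K - d).choose 2 : ℕ)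
      ≤ (K:ℝ) - a * (K.choose 2 : ℕ) := by
    intro d
    induction d with
    | zero => simp
    | succ d ih =>
      by_cases hd : d < K
      · have hm : (K - (d+1)) + 1 = K - d := by omega
        have hmK : ((K - (d+1) : ℕ) : ℝ) ≤ (K:ℝ) - 1 := by
          have : (K - (d+1) : ℕ) + 1 ≤ K := by omega
          have := (Nat.cast_le (α := ℝ)).2 this
          push_cast at this
          linarith
        have hstep := g_succ a (K - (d+1))
        rw [hm] at hstep
        have ha2 : a * ((K - (d+1) : ℕ) : ℝ) ≤ 1 := by
          calc a * ((K - (d+1) : ℕ) : ℝ) ≤ a * ((K:ℝ) - 1) :=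
                mul_le_mul_of_nonneg_left hmK ha0.le
            _ ≤ 1 := hK'
        nlinarith [ih]
      · have : K - (d+1) = K - d := by omega
        rw [this]
        exact ih
  intro k
  rcases le_or_gt k K with h | h
  · have hk2 : K - (K - k) = k := by omega
    have h2 := hdown (K - k)
    rwa [hk2] at h2
  · exact hup k h.le

lemma term_eq (c a : ℝ) (hc : 0 < c) (n k : ℕ) (hn : (1:ℝ) ≤ n) :
    (n:ℝ)^k * ((c/n)^a)^(k.choose 2)
      = c ^ (a * (k.choose 2 : ℕ)) * (n:ℝ) ^ ((k:ℝ) - a * (k.choose 2 : ℕ)) := by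
  have hn0 : (0:ℝ) < n := lt_of_lt_of_le one_pos hn
  have hdiv : (0:ℝ) ≤ c / n := div_nonneg hc.le hn0.le
  rw [← Real.rpow_natCast ((c/n)^a) (k.choose 2), ← Real.rpow_natCast (n:ℝ) k,
    ← Real.rpow_mul hdiv, Real.div_rpow hc.le hn0.le, Real.rpow_sub hn0]
  field_simp

lemma np_half (c a : ℝ) (hc : 0 < c) (ha0 : 0 < a) (K : ℕ) (hK : 1 ≤ a * K) :
    ∀ᶠ n : ℕ in atTop, (n:ℝ) * ((c/n)^a)^(K+1) ≤ 1/2 := by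
  have hexp : 1 - a * (K+1 : ℕ) < 0 := by
    push_cast
    nlinarith
  have ht : Tendsto (fun n : ℕ => c ^ (a * (K+1:ℕ)) * (n:ℝ) ^ (1 - a * (K+1:ℕ)))
      atTop (nhds 0) := by
    have h1 : Tendsto (fun x : ℝ => x ^ (1 - a * (K+1:ℕ))) atTop (nhds 0) := by
      have := tendsto_rpow_neg_atTop (y := a * (K+1:ℕ) - 1) (by linarith)
      convert this using 2 with x
      ring_nf
    have h2 := (h1.comp tendsto_natCast_atTop_atTop (α := ℕ)).const_mul (c ^ (a * (K+1:ℕ)))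
    simpa using h2
  have hev : ∀ᶠ n : ℕ in atTop,
      c ^ (a * (K+1:ℕ)) * (n:ℝ) ^ (1 - a * (K+1:ℕ)) < 1/2 :=
    ht.eventually (gt_mem_nhds (by norm_num))
  filter_upwards [hev, eventually_ge_atTop 1] with n h1 h2
  have hn1 : (1:ℝ) ≤ n := by exact_mod_cast h2
  have hn0 : (0:ℝ) < n := lt_of_lt_of_le one_pos hn1
  have hdiv : (0:ℝ) ≤ c / n := div_nonneg hc.le hn0.le
  have : (n:ℝ) * ((c/n)^a)^(K+1) = c ^ (a * (K+1:ℕ)) * (n:ℝ) ^ (1 - a * (K+1:ℕ)) := by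
    rw [← Real.rpow_natCast ((c/n)^a) (K+1), ← Real.rpow_mul hdiv,
      Real.div_rpow hc.le hn0.le, Real.rpow_sub hn0, Real.rpow_one]
    field_simp
  rw [this]
  exact h1.le

lemma sum_bound (c a : ℝ) (hc : 0 < c) (ha0 : 0 < a) (ha1 : a ≤ 1) :
    ∃ B : ℝ, ∀ᶠ n : ℕ in atTop,
      ∑ k ∈ range (n+1), (n:ℝ)^k * ((c/n)^a)^(k.choose 2)
        ≤ B * (n:ℝ) ^ ((⌈1/a⌉₊:ℝ) - a * (⌈1/a⌉₊.choose 2 : ℕ)) := by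
  set K := ⌈1/a⌉₊ with hKdef
  have hKa : 1 ≤ a * K := by
    have h1 : 1/a ≤ (K:ℝ) := Nat.le_ceil _
    have := mul_le_mul_of_nonneg_left h1 ha0.le
    rwa [mul_one_div_cancel ha0.ne'] at this
  have hKa' : a * ((K:ℝ) - 1) ≤ 1 := by
    have h1 : (K:ℝ) < 1/a + 1 := Nat.ceil_lt_add_one (by positivity)
    have h2 : a * ((K:ℝ) - 1) < a * (1/a) := by
      apply mul_lt_mul_of_pos_left _ ha0
      linarith
    rw [mul_one_div_cancel ha0.ne'] at h2
    exact h2.le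
  set M := (max 1 c) ^ (a * ((K+1).choose 2 : ℕ)) with hM
  have hM1 : (1:ℝ) ≤ M := Real.one_le_rpow (le_max_left 1 c) (by positivity)
  refine ⟨((K:ℝ)+3) * M, ?_⟩
  filter_upwards [np_half c a hc ha0 K hKa, eventually_ge_atTop 1,
    eventually_ge_atTop ⌈c⌉₊] with n hhalf hn1' hcn'
  have hn1 : (1:ℝ) ≤ n := by exact_mod_cast hn1'
  have hn0 : (0:ℝ) < n := lt_of_lt_of_le one_pos hn1
  have hcn : c ≤ (n:ℝ) := by
    have := Nat.ceil_le.1 hcn'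
    exact_mod_cast this
  set r := (c/(n:ℝ))^a with hr
  have hdiv : (0:ℝ) ≤ c / n := div_nonneg hc.le hn0.le
  have hr0 : 0 ≤ r := Real.rpow_nonneg hdiv _
  have hr1 : r ≤ 1 := Real.rpow_le_one hdiv ((div_le_one hn0).2 hcn) ha0.le
  set X := (n:ℝ) ^ ((K:ℝ) - a * (K.choose 2 : ℕ)) with hX
  have hX0 : (0:ℝ) ≤ X := Real.rpow_nonneg hn0.le _
  have hMX0 : (0:ℝ) ≤ M * X := mul_nonneg (zero_le_one.trans hM1) hX0
  have hterm : ∀ k ≤ K+1, (n:ℝ)^k * r^(k.choose 2) ≤ M * X := by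
    intro k hk
    rw [hr, term_eq c a hc n k hn1]
    have h1 : c ^ (a * (k.choose 2 : ℕ)) ≤ M := by
      calc c ^ (a * (k.choose 2 : ℕ)) ≤ (max 1 c) ^ (a * (k.choose 2 : ℕ)) :=
            Real.rpow_le_rpow hc.le (le_max_right 1 c) (by positivity)
        _ ≤ M := Real.rpow_le_rpow_of_exponent_le (le_max_left 1 c)
            (mul_le_mul_of_nonneg_left
              (by exact_mod_cast Nat.choose_le_choose 2 hk) ha0.le)
    have h2 : (n:ℝ) ^ ((k:ℝ) - a * (k.choose 2 : ℕ)) ≤ X :=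
      Real.rpow_le_rpow_of_exponent_le hn1 (g_le a ha0 K hKa hKa' k)
    exact mul_le_mul h1 h2 (Real.rpow_nonneg hn0.le _) (zero_le_one.trans hM1)
  have htail : ∀ k, K+1 ≤ k →
      (n:ℝ)^k * r^(k.choose 2) ≤ M * X * (1/2:ℝ)^(k-(K+1)) := by
    intro k hk
    induction k, hk using Nat.le_induction with
    | base => simpa using hterm (K+1) le_rfl
    | succ k hk ih =>
      have hch : (k+1).choose 2 = k.choose 2 + k := by
        rw [Nat.choose_succ_succ]
        simp [Nat.choose_one_right, Nat.add_comm]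
      have hsplit : (n:ℝ)^(k+1) * r^((k+1).choose 2)
          = ((n:ℝ)^k * r^(k.choose 2)) * ((n:ℝ) * r^k) := by
        rw [hch, pow_add, pow_succ]; ring
      have hhk : (n:ℝ) * r^k ≤ 1/2 := by
        calc (n:ℝ) * r^k ≤ (n:ℝ) * r^(K+1) :=
              mul_le_mul_of_nonneg_left (pow_le_pow_of_le_one hr0 hr1 hk) hn0.le
          _ ≤ 1/2 := hhalf
      have hpow : (1/2:ℝ)^(k+1-(K+1)) = (1/2:ℝ)^(k-(K+1)) * (1/2) := by
        have h : k+1-(K+1) = (k-(K+1)) + 1 := by omega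
        rw [h, pow_succ]
      rw [hsplit]
      have hb0 : 0 ≤ (n:ℝ) * r^k := mul_nonneg hn0.le (pow_nonneg hr0 k)
      refine le_trans (mul_le_mul ih hhk hb0
        (mul_nonneg hMX0 (pow_nonneg (by norm_num) _))) (le_of_eq ?_)
      rw [hpow]
      ring
  rw [← Finset.sum_filter_add_sum_filter_not (range (n+1)) (fun k => k ≤ K)]
  have h1 : ∑ k ∈ (range (n+1)).filter (fun k => k ≤ K), (n:ℝ)^k * r^(k.choose 2)
      ≤ ((K:ℝ)+1) * (M * X) := by
    have hb : ∀ k ∈ (range (n+1)).filter (fun k => k ≤ K),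
        (n:ℝ)^k * r^(k.choose 2) ≤ M * X :=
      fun k hk => hterm k (le_trans (mem_filter.1 hk).2 (Nat.le_succ K))
    calc ∑ k ∈ (range (n+1)).filter (fun k => k ≤ K), (n:ℝ)^k * r^(k.choose 2)
        ≤ ((range (n+1)).filter (fun k => k ≤ K)).card • (M * X) :=
          Finset.sum_le_card_nsmul _ _ _ hb
      _ ≤ ((K:ℝ)+1) * (M * X) := by
          rw [nsmul_eq_mul]
          apply mul_le_mul_of_nonneg_right _ hMX0
          have hsub : (range (n+1)).filter (fun k => k ≤ K) ⊆ range (K+1) := by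
            intro k hk
            rw [mem_range, Nat.lt_succ_iff]
            exact (mem_filter.1 hk).2
          have := Finset.card_le_card hsub
          rw [Finset.card_range] at this
          exact_mod_cast this
  have h2 : ∑ k ∈ (range (n+1)).filter (fun k => ¬ k ≤ K), (n:ℝ)^k * r^(k.choose 2)
      ≤ (M * X) * 2 := by
    calc ∑ k ∈ (range (n+1)).filter (fun k => ¬ k ≤ K), (n:ℝ)^k * r^(k.choose 2)
        ≤ ∑ k ∈ (range (n+1)).filter (fun k => ¬ k ≤ K), (M * X) * (1/2:ℝ)^(k-(K+1)) := by
          apply Finset.sum_le_sum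
          intro k hk
          exact htail k (Nat.succ_le_of_lt (not_le.1 (mem_filter.1 hk).2))
      _ ≤ (M * X) * 2 := by
          rw [← Finset.mul_sum]
          apply mul_le_mul_of_nonneg_left _ hMX0
          have hIco : (range (n+1)).filter (fun k => ¬ k ≤ K) = Finset.Ico (K+1) (n+1) := by
            ext k
            simp only [mem_filter, mem_range, Finset.mem_Ico, not_le]
            omega
          rw [hIco, Finset.sum_Ico_eq_sum_range]
          have heq : ∀ i, (1/2:ℝ)^(K+1+i-(K+1)) = (1/2:ℝ)^i := by
            intro i
            congr 1
            omega
          calc ∑ i ∈ range (n+1-(K+1)), (1/2:ℝ)^(K+1+i-(K+1))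
              = ∑ i ∈ range (n+1-(K+1)), (1/2:ℝ)^i :=
                Finset.sum_congr rfl fun i _ => heq i
            _ ≤ 2 := sum_geometric_two_le _
  calc _ ≤ ((K:ℝ)+1) * (M * X) + (M * X) * 2 := add_le_add h1 h2
    _ = ((K:ℝ)+3) * M * X := by ring

/-- For `p = (c/n)^a` with constants `c > 0`, `a ∈ (0,1]`, the expected number of
maximal cliques in `G(n,p)` is `O(n^x)` with `x = ⌈1/a⌉ - a·C(⌈1/a⌉,2)`;
in particular for `a = 1` it is `O(n)`. -/
theorem stmt6 (c a : ℝ) (hc : 0 < c) (ha0 : 0 < a) (ha1 : a ≤ 1) :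
    (fun n : ℕ => ∫ f, (maxCliqueCount n f : ℝ)
        ∂ erMeasure n (min (ENNReal.ofReal ((c / n) ^ a)) 1) (min_le_right _ _))
      =O[atTop] (fun n : ℕ => (n : ℝ) ^ ((⌈1 / a⌉₊ : ℝ) - a * (⌈1 / a⌉₊.choose 2 : ℝ))) ∧
    (a = 1 → (fun n : ℕ => ∫ f, (maxCliqueCount n f : ℝ)
        ∂ erMeasure n (min (ENNReal.ofReal ((c / n) ^ a)) 1) (min_le_right _ _))
      =O[atTop] (fun n : ℕ => (n : ℝ))) := by
  have key : (fun n : ℕ => ∫ f, (maxCliqueCount n f : ℝ)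
        ∂ erMeasure n (min (ENNReal.ofReal ((c / n) ^ a)) 1) (min_le_right _ _))
      =O[atTop] (fun n : ℕ => (n : ℝ) ^ ((⌈1 / a⌉₊ : ℝ) - a * (⌈1 / a⌉₊.choose 2 : ℝ))) := by
    obtain ⟨B, hB⟩ := sum_bound c a hc ha0 ha1
    rw [Asymptotics.isBigO_iff]
    refine ⟨B, ?_⟩
    filter_upwards [hB, eventually_ge_atTop 1] with n hBn hn1'
    have hn1 : (1:ℝ) ≤ n := by exact_mod_cast hn1'
    have hr0 : (0:ℝ) ≤ (c/n)^a := Real.rpow_nonneg (div_nonneg hc.le (Nat.cast_nonneg n)) _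
    set p : ℝ≥0∞ := min (ENNReal.ofReal ((c / n) ^ a)) 1 with hp
    have hple : p ≤ 1 := min_le_right _ _
    have hpt : p.toReal ≤ (c/n)^a := by
      have h := ENNReal.toReal_mono (ENNReal.ofReal_ne_top)
        (min_le_left (ENNReal.ofReal ((c / n) ^ a)) 1)
      rwa [ENNReal.toReal_ofReal hr0] at h
    have hpt0 : (0:ℝ) ≤ p.toReal := ENNReal.toReal_nonneg
    have hint0 : 0 ≤ ∫ f, (maxCliqueCount n f : ℝ) ∂ erMeasure n p hple :=
      integral_nonneg fun f => Nat.cast_nonneg _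
    rw [Real.norm_of_nonneg hint0,
      Real.norm_of_nonneg (Real.rpow_nonneg (Nat.cast_nonneg n) _)]
    calc ∫ f, (maxCliqueCount n f : ℝ) ∂ erMeasure n p hple
        ≤ ∑ k ∈ range (n + 1), (n.choose k : ℝ) * p.toReal ^ (k.choose 2) := exp_le n p hple
      _ ≤ ∑ k ∈ range (n + 1), (n:ℝ)^k * ((c/n)^a)^(k.choose 2) := by
          apply Finset.sum_le_sum
          intro k _
          apply mul_le_mul
          · exact_mod_cast Nat.choose_le_pow n k
          · exact pow_le_pow_left₀ hpt0 hpt _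
          · exact pow_nonneg hpt0 _
          · positivity
      _ ≤ B * (n:ℝ) ^ ((⌈1 / a⌉₊ : ℝ) - a * (⌈1 / a⌉₊.choose 2 : ℝ)) := hBn
  refine ⟨key, ?_⟩
  intro ha
  subst ha
  have heq : (fun n : ℕ => (n : ℝ) ^ ((⌈1 / (1:ℝ)⌉₊ : ℝ) - 1 * (⌈1 / (1:ℝ)⌉₊.choose 2 : ℝ)))
      = fun n : ℕ => (n:ℝ) := by
    funext n
    norm_num
  rwa [heq] at key
end
end

section
/- For every constant c > 0 there exist ζ > 0 and n' such that for all n ≥ n', the graph G(n, 1 - c/n) contains at least 2^{ζn} maximal cliques with high probability. -/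
open MeasureTheory Filter Finset
open scoped ENNReal Classical Topology

noncomputable section

def wR (n : ℕ) (r : ℝ) (f : Sym2 (Fin n) → Bool) : ℝ :=
  ∏ e : Sym2 (Fin n), (if f e then 1 - r else r)

lemma wR_nonneg {n : ℕ} {r : ℝ} (hr0 : 0 ≤ r) (hr1 : r ≤ 1) (f : Sym2 (Fin n) → Bool) :
    0 ≤ wR n r f :=
  Finset.prod_nonneg fun e _ => by by_cases h : f e <;> simp [h] <;> linarith

lemma meas_singleton {n : ℕ} {r : ℝ} (hr0 : 0 ≤ r) (hr1 : r ≤ 1) (f : Sym2 (Fin n) → Bool) :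
    erMeasure n (ENNReal.ofReal (1 - r)) (ENNReal.ofReal_le_one.mpr (by linarith))
      {f} = ENNReal.ofReal (wR n r f) := by
  have h1 : ({f} : Set (Sym2 (Fin n) → Bool)) = Set.pi Set.univ (fun e => {f e}) := by
    ext g; simp [funext_iff, Set.mem_pi, eq_comm]
  rw [h1, erMeasure, Measure.pi_pi, wR,
    ENNReal.ofReal_prod_of_nonneg (fun e _ => by by_cases h : f e <;> simp [h] <;> linarith)]
  refine Finset.prod_congr rfl fun e _ => ?_
  rw [PMF.toMeasure_apply_singleton _ _ (measurableSet_singleton _)]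
  refine (PMF.bernoulli_apply _ (f e)).trans ?_
  cases hfe : f e with
  | true => simp [ENNReal.coe_toNNReal ENNReal.ofReal_ne_top]
  | false =>
      simp only [Bool.cond_false, if_false]
      rw [ENNReal.coe_sub, ENNReal.coe_one, ENNReal.coe_toNNReal ENNReal.ofReal_ne_top]
      rw [← ENNReal.ofReal_one, ← ENNReal.ofReal_sub _ (by linarith)]
      norm_num

lemma meas_finset {n : ℕ} {r : ℝ} (hr0 : 0 ≤ r) (hr1 : r ≤ 1)
    (F : Finset (Sym2 (Fin n) → Bool)) :
    erMeasure n (ENNReal.ofReal (1 - r)) (ENNReal.ofReal_le_one.mpr (by linarith))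
      ↑F = ENNReal.ofReal (∑ f ∈ F, wR n r f) := by
  have h1 : (↑F : Set (Sym2 (Fin n) → Bool)) = ⋃ f ∈ F, {f} := by
    ext g; simp
  rw [h1, measure_biUnion_finset ?dis (fun b _ => measurableSet_singleton b),
    ENNReal.ofReal_sum_of_nonneg (fun f _ => wR_nonneg hr0 hr1 f)]
  · exact Finset.sum_congr rfl fun f _ => meas_singleton hr0 hr1 f
  case dis => intro x _ y hy hxy; simp only [Set.disjoint_singleton]; exact hxy

instance erProb (n : ℕ) (p : ℝ≥0∞) (hp : p ≤ 1) : IsProbabilityMeasure (erMeasure n p hp) := by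
  unfold erMeasure; infer_instance

lemma wR_total {n : ℕ} {r : ℝ} (hr0 : 0 ≤ r) (hr1 : r ≤ 1) :
    ∑ f : Sym2 (Fin n) → Bool, wR n r f = 1 := by
  have h := meas_finset (n := n) hr0 hr1 Finset.univ
  rw [Finset.coe_univ, measure_univ] at h
  have := h.symm
  rwa [ENNReal.ofReal_eq_one] at this



lemma bern_single {p : ℝ≥0∞} (hp : p ≤ 1) (b : Bool) :
    (PMF.bernoulli p.toNNReal (by simpa using ENNReal.toNNReal_mono ENNReal.one_ne_top hp)).toMeasure
      {b} = cond b p (1 - p) := by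
  rw [PMF.toMeasure_apply_singleton _ _ (measurableSet_singleton _)]
  refine (PMF.bernoulli_apply _ b).trans ?_
  cases b <;> simp [ENNReal.coe_sub, ENNReal.coe_toNNReal (ne_top_of_le_ne_top ENNReal.one_ne_top hp)]

lemma cylR {n : ℕ} {r : ℝ} (hr0 : 0 ≤ r) (hr1 : r ≤ 1)
    (T : Finset (Sym2 (Fin n))) (g : Sym2 (Fin n) → Bool) :
    ∑ f ∈ Finset.univ.filter (fun f => ∀ e ∈ T, f e = g e), wR n r f
      = ∏ e ∈ T, (if g e then 1 - r else r) := by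
  have hset : (↑(Finset.univ.filter (fun f : Sym2 (Fin n) → Bool => ∀ e ∈ T, f e = g e)) :
      Set (Sym2 (Fin n) → Bool))
      = Set.pi Set.univ (fun e => if e ∈ T then {g e} else Set.univ) := by
    ext f
    simp only [Finset.coe_filter, Set.mem_setOf_eq, Finset.mem_univ, true_and, Set.mem_pi]
    constructor
    · intro h e _
      by_cases he : e ∈ T <;> simp [he, h]
    · intro h e he
      have := h e (Set.mem_univ e); simpa [he] using this
  have h2 := meas_finset hr0 hr1
    (Finset.univ.filter (fun f : Sym2 (Fin n) → Bool => ∀ e ∈ T, f e = g e))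
  rw [hset] at h2
  rw [erMeasure, Measure.pi_pi] at h2
  have h3 : ∀ e : Sym2 (Fin n),
      (PMF.bernoulli (ENNReal.ofReal (1 - r)).toNNReal (by simpa using ENNReal.toNNReal_mono ENNReal.one_ne_top (ENNReal.ofReal_le_one.mpr (by linarith : (1:ℝ) - r ≤ 1)))).toMeasure
        (if e ∈ T then {g e} else Set.univ)
      = if e ∈ T then ENNReal.ofReal (if g e then 1 - r else r) else 1 := by
    intro e
    by_cases he : e ∈ T
    · simp only [he, if_true]
      rw [bern_single (ENNReal.ofReal_le_one.mpr (by linarith))]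
      cases hge : g e
      · simp only [Bool.cond_false, if_false]
        rw [← ENNReal.ofReal_one, ← ENNReal.ofReal_sub _ (by linarith)]
        norm_num
      · simp
    · simp only [he, if_false]
      exact measure_univ
  simp only [h3] at h2
  rw [Finset.prod_ite_mem, Finset.univ_inter,
    ← ENNReal.ofReal_prod_of_nonneg
      (fun e _ => by by_cases h : g e <;> simp [h] <;> linarith)] at h2
  have hnn1 : 0 ≤ ∑ f ∈ Finset.univ.filter (fun f : Sym2 (Fin n) → Bool => ∀ e ∈ T, f e = g e),
      wR n r f := Finset.sum_nonneg fun f _ => wR_nonneg hr0 hr1 f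
  have hnn2 : 0 ≤ ∏ e ∈ T, (if g e then 1 - r else r) :=
    Finset.prod_nonneg fun e _ => by by_cases h : g e <;> simp [h] <;> linarith
  exact ((ENNReal.ofReal_eq_ofReal_iff hnn2 hnn1).mp h2).symm



def Tpair {n : ℕ} (u v : Fin n) : Finset (Sym2 (Fin n)) :=
  ((Finset.univ.erase u).image fun w => s(u, w)) ∪ ((Finset.univ.erase v).image fun w => s(v, w))

def gpair {n : ℕ} (u v : Fin n) : Sym2 (Fin n) → Bool := fun e => decide (e ≠ s(u, v))

def IsoP {n : ℕ} (f : Sym2 (Fin n) → Bool) (u v : Fin n) : Prop :=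
  ∀ e ∈ Tpair u v, f e = gpair u v e

lemma mem_Tpair {n : ℕ} {u v : Fin n} {e : Sym2 (Fin n)} :
    e ∈ Tpair u v ↔ ¬ e.IsDiag ∧ (u ∈ e ∨ v ∈ e) := by
  induction e using Sym2.ind with
  | _ a b =>
    simp only [Tpair, Finset.mem_union, Finset.mem_image, Finset.mem_erase, Finset.mem_univ,
      and_true, Sym2.mk_isDiag_iff, Sym2.mem_iff]
    constructor
    · rintro (⟨w, hw, he⟩ | ⟨w, hw, he⟩) <;>
        rcases Sym2.eq_iff.mp he with ⟨h1, h2⟩ | ⟨h1, h2⟩ <;>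
        subst h1 <;> subst h2 <;> simp_all [eq_comm] <;> tauto
    · rintro ⟨hab, hmem⟩
      rcases hmem with (h | h) | (h | h)
      · left; exact ⟨b, by subst h; exact fun hb => hab hb.symm, by subst h; rfl⟩
      · left; exact ⟨a, by subst h; exact fun hb => hab hb, by subst h; exact Sym2.eq_swap⟩
      · right; exact ⟨b, by subst h; exact fun hb => hab hb.symm, by subst h; rfl⟩
      · right; exact ⟨a, by subst h; exact fun hb => hab hb, by subst h; exact Sym2.eq_swap⟩

lemma spair_mem_Tpair {n : ℕ} {u v : Fin n} (huv : u ≠ v) : s(u, v) ∈ Tpair u v :=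
  mem_Tpair.mpr ⟨by simp [Sym2.mk_isDiag_iff, huv], Or.inl (by simp)⟩

lemma card_Tpair {n : ℕ} {u v : Fin n} (huv : u ≠ v) : (Tpair u v).card = 2 * n - 3 := by
  have h1 : ((Finset.univ.erase u).image fun w => s(u, w)).card = n - 1 := by
    rw [Finset.card_image_of_injOn, Finset.card_erase_of_mem (Finset.mem_univ u),
      Finset.card_univ, Fintype.card_fin]
    intro a ha b hb hab
    rcases Sym2.eq_iff.mp hab with ⟨_, h⟩ | ⟨h1, h2⟩
    · exact h
    · exact h2.trans h1
  have h2 : ((Finset.univ.erase v).image fun w => s(v, w)).card = n - 1 := by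
    rw [Finset.card_image_of_injOn, Finset.card_erase_of_mem (Finset.mem_univ v),
      Finset.card_univ, Fintype.card_fin]
    intro a ha b hb hab
    rcases Sym2.eq_iff.mp hab with ⟨_, h⟩ | ⟨h1, h2⟩
    · exact h
    · exact h2.trans h1
  have h3 : (((Finset.univ.erase u).image fun w => s(u, w)) ∩
      ((Finset.univ.erase v).image fun w => s(v, w))) = {s(u, v)} := by
    ext e
    simp only [Finset.mem_inter, Finset.mem_image, Finset.mem_erase, Finset.mem_univ, and_true,
      Finset.mem_singleton]
    constructor
    · rintro ⟨⟨a, ha, hea⟩, ⟨b, hb, heb⟩⟩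
      subst hea
      rcases Sym2.eq_iff.mp heb with ⟨h1, _⟩ | ⟨h1, _⟩
      · exact absurd h1.symm huv
      · rw [← h1]
    · rintro rfl
      exact ⟨⟨v, Ne.symm huv, rfl⟩, ⟨u, ⟨huv, Sym2.eq_swap⟩⟩⟩
  have h4 := Finset.card_union_add_card_inter
    ((Finset.univ.erase u).image fun w => s(u, w))
    ((Finset.univ.erase v).image fun w => s(v, w))
  rw [h1, h2, h3, Finset.card_singleton] at h4
  have hn : 2 ≤ n := by
    have h1 : u.val ≠ v.val := fun h => huv (Fin.ext h)
    have := u.2; have := v.2; omega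
  unfold Tpair
  omega


lemma two_le_of_ne {n : ℕ} {u v : Fin n} (huv : u ≠ v) : 2 ≤ n := by
  have h1 : u.val ≠ v.val := fun h => huv (Fin.ext h)
  have := u.2; have := v.2; omega

lemma prob_iso {n : ℕ} {r : ℝ} (hr0 : 0 ≤ r) (hr1 : r ≤ 1) {u v : Fin n} (huv : u ≠ v) :
    ∑ f ∈ Finset.univ.filter (fun f => IsoP f u v), wR n r f
      = r * (1 - r) ^ (2 * n - 4) := by
  have h := cylR hr0 hr1 (Tpair u v) (gpair u v)
  rw [show (Finset.univ.filter fun f : Sym2 (Fin n) → Bool => IsoP f u v)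
      = Finset.univ.filter (fun f => ∀ e ∈ Tpair u v, f e = gpair u v e) from
      Finset.filter_congr (fun f _ => Iff.rfl), h,
    ← Finset.mul_prod_erase _ _ (spair_mem_Tpair huv)]
  have hg : gpair u v s(u, v) = false := by simp [gpair]
  rw [hg]
  simp only [Bool.false_eq_true, if_false]
  congr 1
  have hall : ∀ e ∈ (Tpair u v).erase s(u, v),
      (if gpair u v e then 1 - r else r) = 1 - r := by
    intro e he
    have : gpair u v e = true := by
      simp only [gpair, decide_eq_true_iff]
      exact (Finset.mem_erase.mp he).1
    rw [this, if_pos rfl]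
  rw [Finset.prod_congr rfl hall, Finset.prod_const,
    Finset.card_erase_of_mem (spair_mem_Tpair huv), card_Tpair huv,
    show 2 * n - 3 - 1 = 2 * n - 4 from by omega]

lemma spair_ne {n : ℕ} {u v x y : Fin n}
    (hux : u ≠ x) (huy : u ≠ y) (hvx : v ≠ x) (hvy : v ≠ y) : s(u, v) ≠ s(x, y) := by
  intro h
  rcases Sym2.eq_iff.mp h with ⟨h1, _⟩ | ⟨h1, _⟩
  · exact hux h1
  · exact huy h1

lemma prob_two_bound {n : ℕ} {r : ℝ} (hr0 : 0 ≤ r) (hr1 : r ≤ 1) {u v x y : Fin n}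
    (huv : u ≠ v) (hxy : x ≠ y)
    (hux : u ≠ x) (huy : u ≠ y) (hvx : v ≠ x) (hvy : v ≠ y) :
    ∑ f ∈ Finset.univ.filter (fun f => IsoP f u v ∧ IsoP f x y), wR n r f
      ≤ r ^ 2 * (1 - r) ^ (4 * n - 12) := by
  set U := Tpair u v ∪ Tpair x y with hU
  set G : Sym2 (Fin n) → Bool := fun e => decide (e ≠ s(u, v) ∧ e ≠ s(x, y)) with hG
  -- pointwise agreement
  have hagree1 : ∀ e ∈ Tpair u v, G e = gpair u v e := by
    intro e he
    have hne : e ≠ s(x, y) := by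
      intro hxe
      rcases (mem_Tpair.mp he).2 with h | h <;> rw [hxe] at h <;>
        rcases Sym2.mem_iff.mp h with h' | h' <;> simp_all
    simp [hG, gpair, hne]
  have hagree2 : ∀ e ∈ Tpair x y, G e = gpair x y e := by
    intro e he
    have hne : e ≠ s(u, v) := by
      intro hxe
      rcases (mem_Tpair.mp he).2 with h | h <;> rw [hxe] at h <;>
        rcases Sym2.mem_iff.mp h with h' | h' <;> simp_all [eq_comm]
    simp [hG, gpair, hne]
  have hsetEq : (Finset.univ.filter fun f : Sym2 (Fin n) → Bool => IsoP f u v ∧ IsoP f x y)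
      = Finset.univ.filter (fun f => ∀ e ∈ U, f e = G e) := by
    refine Finset.filter_congr fun f _ => ?_
    simp only [hU, Finset.mem_union, IsoP]
    constructor
    · rintro ⟨h1, h2⟩ e he
      rcases he with he | he
      · rw [h1 e he, hagree1 e he]
      · rw [h2 e he, hagree2 e he]
    · intro h
      constructor
      · intro e he; rw [h e (Or.inl he), hagree1 e he]
      · intro e he; rw [h e (Or.inr he), hagree2 e he]
  rw [hsetEq, cylR hr0 hr1 U G]
  -- now evaluate/bound the product
  have hmem1 : s(u, v) ∈ U := Finset.mem_union_left _ (spair_mem_Tpair huv)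
  have hsne : s(u, v) ≠ s(x, y) := spair_ne hux huy hvx hvy
  have hmem2 : s(x, y) ∈ U.erase s(u, v) :=
    Finset.mem_erase.mpr ⟨hsne.symm, Finset.mem_union_right _ (spair_mem_Tpair hxy)⟩
  rw [← Finset.mul_prod_erase _ _ hmem1, ← Finset.mul_prod_erase _ _ hmem2]
  have hG1 : G s(u, v) = false := by simp [hG]
  have hG2 : G s(x, y) = false := by simp [hG]
  rw [hG1, hG2]
  simp only [Bool.false_eq_true, if_false]
  have hrest : ∀ e ∈ (U.erase s(u, v)).erase s(x, y),
      (if G e then 1 - r else r) = 1 - r := by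
    intro e he
    have h1 : e ≠ s(x, y) := (Finset.mem_erase.mp he).1
    have h2 : e ≠ s(u, v) := (Finset.mem_erase.mp (Finset.mem_erase.mp he).2).1
    simp [hG, h1, h2]
  rw [Finset.prod_congr rfl hrest, Finset.prod_const]
  -- cardinality lower bound
  have hinter : Tpair u v ∩ Tpair x y ⊆ {s(u, x), s(u, y), s(v, x), s(v, y)} := by
    intro e he
    have h1 := mem_Tpair.mp (Finset.mem_inter.mp he).1
    have h2 := mem_Tpair.mp (Finset.mem_inter.mp he).2
    simp only [Finset.mem_insert, Finset.mem_singleton]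
    rcases h1.2 with ha | ha <;> rcases h2.2 with hb | hb
    · exact Or.inl ((Sym2.mem_and_mem_iff hux).mp ⟨ha, hb⟩)
    · exact Or.inr (Or.inl ((Sym2.mem_and_mem_iff huy).mp ⟨ha, hb⟩))
    · exact Or.inr (Or.inr (Or.inl ((Sym2.mem_and_mem_iff hvx).mp ⟨ha, hb⟩)))
    · exact Or.inr (Or.inr (Or.inr ((Sym2.mem_and_mem_iff hvy).mp ⟨ha, hb⟩)))
  have hintercard : (Tpair u v ∩ Tpair x y).card ≤ 4 := by
    refine le_trans (Finset.card_le_card hinter) ?_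
    refine le_trans (Finset.card_insert_le _ _) ?_
    refine Nat.succ_le_succ ?_
    refine le_trans (Finset.card_insert_le _ _) ?_
    refine Nat.succ_le_succ ?_
    refine le_trans (Finset.card_insert_le _ _) ?_
    exact Nat.succ_le_succ (le_of_eq (Finset.card_singleton _))
  have hUcard : 4 * n - 10 ≤ U.card := by
    have := Finset.card_union_add_card_inter (Tpair u v) (Tpair x y)
    rw [card_Tpair huv, card_Tpair hxy, ← hU] at this
    have hn := two_le_of_ne huv
    omega
  have hcard2 : 4 * n - 12 ≤ (((U.erase s(u, v)).erase s(x, y))).card := by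
    rw [Finset.card_erase_of_mem hmem2, Finset.card_erase_of_mem hmem1]
    omega
  calc r * (r * (1 - r) ^ (((U.erase s(u, v)).erase s(x, y))).card)
      ≤ r * (r * (1 - r) ^ (4 * n - 12)) := by
        have := pow_le_pow_of_le_one (by linarith : (0:ℝ) ≤ 1 - r) (by linarith) hcard2
        have hr2 : 0 ≤ r * (1-r)^(4*n-12) → True := fun _ => trivial
        apply mul_le_mul_of_nonneg_left _ hr0
        exact mul_le_mul_of_nonneg_left this hr0
    _ = r ^ 2 * (1 - r) ^ (4 * n - 12) := by ring

lemma prob_share_zero {n : ℕ} {u v x y : Fin n}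
    (huv : u ≠ v) (hxy : x ≠ y) (hne : s(u, v) ≠ s(x, y))
    (hshare : u = x ∨ u = y ∨ v = x ∨ v = y) :
    (Finset.univ.filter fun f : Sym2 (Fin n) → Bool => IsoP f u v ∧ IsoP f x y) = ∅ := by
  rw [Finset.filter_eq_empty_iff]
  rintro f - ⟨h1, h2⟩
  have hv1 : f s(u, v) = false := by
    have := h1 s(u, v) (spair_mem_Tpair huv)
    simpa [gpair] using this
  have hmemxy : s(u, v) ∈ Tpair x y := by
    refine mem_Tpair.mpr ⟨by simp [Sym2.mk_isDiag_iff, huv], ?_⟩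
    rcases hshare with h | h | h | h
    · exact Or.inl (by rw [← h]; simp)
    · exact Or.inr (by rw [← h]; simp)
    · exact Or.inl (by rw [← h]; simp)
    · exact Or.inr (by rw [← h]; simp)
  have hv2 : f s(u, v) = true := by
    have := h2 s(u, v) hmemxy
    simpa [gpair, hne] using this
  rw [hv1] at hv2
  exact Bool.false_ne_true hv2


def pairsF (n : ℕ) : Finset (Fin n × Fin n) := Finset.univ.filter fun a => a.1 < a.2

def XI {n : ℕ} (f : Sym2 (Fin n) → Bool) : ℕ :=
  ((pairsF n).filter fun a => IsoP f a.1 a.2).card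

lemma XI_cast {n : ℕ} (f : Sym2 (Fin n) → Bool) :
    (XI f : ℝ) = ∑ a ∈ pairsF n, (if IsoP f a.1 a.2 then (1:ℝ) else 0) := by
  rw [XI, Finset.card_filter]
  push_cast
  exact Finset.sum_congr rfl fun a _ => by split <;> norm_num

lemma sum_ind {n : ℕ} {r : ℝ} (p : (Sym2 (Fin n) → Bool) → Prop) [DecidablePred p] :
    ∑ f : Sym2 (Fin n) → Bool, wR n r f * (if p f then (1:ℝ) else 0)
      = ∑ f ∈ Finset.univ.filter p, wR n r f := by
  rw [Finset.sum_filter]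
  exact Finset.sum_congr rfl fun f _ => by split <;> simp

lemma S1_eq {n : ℕ} {r : ℝ} (hr0 : 0 ≤ r) (hr1 : r ≤ 1) :
    ∑ f : Sym2 (Fin n) → Bool, wR n r f * (XI f : ℝ)
      = ((pairsF n).card : ℝ) * (r * (1 - r) ^ (2 * n - 4)) := by
  have h1 : ∀ f : Sym2 (Fin n) → Bool, wR n r f * (XI f : ℝ)
      = ∑ a ∈ pairsF n, wR n r f * (if IsoP f a.1 a.2 then (1:ℝ) else 0) := by
    intro f; rw [XI_cast, Finset.mul_sum]
  rw [Finset.sum_congr rfl fun f _ => h1 f, Finset.sum_comm]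
  rw [Finset.sum_congr rfl fun a (ha : a ∈ pairsF n) => sum_ind (fun f => IsoP f a.1 a.2)]
  rw [Finset.sum_congr rfl (fun a (ha : a ∈ pairsF n) => prob_iso hr0 hr1
    (ne_of_lt (Finset.mem_filter.mp ha).2)), Finset.sum_const, nsmul_eq_mul]

lemma S2_bound {n : ℕ} {r : ℝ} (hr0 : 0 ≤ r) (hr1 : r ≤ 1) :
    ∑ f : Sym2 (Fin n) → Bool, wR n r f * (XI f : ℝ) ^ 2
      ≤ ((pairsF n).card : ℝ) * (r * (1 - r) ^ (2 * n - 4))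
        + ((pairsF n).card : ℝ) ^ 2 * (r ^ 2 * (1 - r) ^ (4 * n - 12)) := by
  have key : ∀ f : Sym2 (Fin n) → Bool, wR n r f * (XI f : ℝ) ^ 2
      = ∑ a ∈ pairsF n, ∑ b ∈ pairsF n,
          wR n r f * (if IsoP f a.1 a.2 ∧ IsoP f b.1 b.2 then (1:ℝ) else 0) := by
    intro f
    rw [sq, XI_cast, Finset.sum_mul_sum]
    rw [Finset.mul_sum]
    refine Finset.sum_congr rfl fun a _ => ?_
    rw [Finset.mul_sum]
    refine Finset.sum_congr rfl fun b _ => ?_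
    by_cases h1 : IsoP f a.1 a.2 <;> by_cases h2 : IsoP f b.1 b.2 <;> simp [h1, h2]
  rw [Finset.sum_congr rfl fun f _ => key f, Finset.sum_comm]
  have swap2 : ∀ a ∈ pairsF n,
      ∑ f : Sym2 (Fin n) → Bool, ∑ b ∈ pairsF n,
          wR n r f * (if IsoP f a.1 a.2 ∧ IsoP f b.1 b.2 then (1:ℝ) else 0)
      = ∑ b ∈ pairsF n, ∑ f ∈ Finset.univ.filter
          (fun f => IsoP f a.1 a.2 ∧ IsoP f b.1 b.2), wR n r f := by
    intro a _
    rw [Finset.sum_comm]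
    exact Finset.sum_congr rfl fun b _ => sum_ind _
  rw [Finset.sum_congr rfl swap2]
  have hB2 : (0:ℝ) ≤ r ^ 2 * (1 - r) ^ (4 * n - 12) :=
    mul_nonneg (sq_nonneg r) (pow_nonneg (by linarith) _)
  have term_bound : ∀ a ∈ pairsF n, ∀ b ∈ pairsF n,
      ∑ f ∈ Finset.univ.filter (fun f => IsoP f a.1 a.2 ∧ IsoP f b.1 b.2), wR n r f
      ≤ if a = b then r * (1 - r) ^ (2 * n - 4) else r ^ 2 * (1 - r) ^ (4 * n - 12) := by
    intro a ha b hb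
    have hav : a.1 < a.2 := (Finset.mem_filter.mp ha).2
    have hbv : b.1 < b.2 := (Finset.mem_filter.mp hb).2
    by_cases hab : a = b
    · subst hab
      rw [if_pos rfl, show (Finset.univ.filter fun f : Sym2 (Fin n) → Bool =>
          IsoP f a.1 a.2 ∧ IsoP f a.1 a.2) = Finset.univ.filter fun f => IsoP f a.1 a.2 from
          Finset.filter_congr fun f _ => and_self_iff, prob_iso hr0 hr1 (ne_of_lt hav)]
    · rw [if_neg hab]
      have hsne : s(a.1, a.2) ≠ s(b.1, b.2) := by
        intro h
        rcases Sym2.eq_iff.mp h with ⟨h1, h2⟩ | ⟨h1, h2⟩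
        · exact hab (Prod.ext h1 h2)
        · exact absurd hav (by rw [h1, h2]; exact asymm hbv)
      by_cases hsh : a.1 = b.1 ∨ a.1 = b.2 ∨ a.2 = b.1 ∨ a.2 = b.2
      · rw [prob_share_zero (ne_of_lt hav) (ne_of_lt hbv) hsne hsh, Finset.sum_empty]
        exact hB2
      · push_neg at hsh
        exact prob_two_bound hr0 hr1 (ne_of_lt hav) (ne_of_lt hbv)
          hsh.1 hsh.2.1 hsh.2.2.1 hsh.2.2.2
  calc ∑ a ∈ pairsF n, ∑ b ∈ pairsF n, ∑ f ∈ Finset.univ.filter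
          (fun f => IsoP f a.1 a.2 ∧ IsoP f b.1 b.2), wR n r f
      ≤ ∑ a ∈ pairsF n, ∑ b ∈ pairsF n,
          (if a = b then r * (1 - r) ^ (2 * n - 4) else r ^ 2 * (1 - r) ^ (4 * n - 12)) :=
        Finset.sum_le_sum fun a ha => Finset.sum_le_sum fun b hb => term_bound a ha b hb
    _ ≤ ((pairsF n).card : ℝ) * (r * (1 - r) ^ (2 * n - 4))
        + ((pairsF n).card : ℝ) ^ 2 * (r ^ 2 * (1 - r) ^ (4 * n - 12)) := by
        have hB1 : (0:ℝ) ≤ r * (1 - r) ^ (2 * n - 4) :=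
          mul_nonneg hr0 (pow_nonneg (by linarith) _)
        have inner : ∀ a ∈ pairsF n, ∑ b ∈ pairsF n,
            (if a = b then r * (1 - r) ^ (2 * n - 4) else r ^ 2 * (1 - r) ^ (4 * n - 12))
            ≤ r * (1 - r) ^ (2 * n - 4) + ((pairsF n).card : ℝ) * (r ^ 2 * (1 - r) ^ (4 * n - 12)) := by
          intro a ha
          rw [Finset.sum_eq_sum_sdiff_singleton_add ha]
          have hdiff : ∑ b ∈ pairsF n \ {a},
              (if a = b then r * (1 - r) ^ (2 * n - 4) else r ^ 2 * (1 - r) ^ (4 * n - 12))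
              = ∑ _b ∈ pairsF n \ {a}, r ^ 2 * (1 - r) ^ (4 * n - 12) :=
            Finset.sum_congr rfl fun b hb => if_neg fun h =>
              (Finset.mem_sdiff.mp hb).2 (Finset.mem_singleton.mpr h.symm)
          rw [hdiff, if_pos rfl, Finset.sum_const, nsmul_eq_mul, add_comm]
          have hc : ((pairsF n \ {a}).card : ℝ) ≤ ((pairsF n).card : ℝ) := by
            exact_mod_cast Finset.card_le_card Finset.sdiff_subset
          have := mul_le_mul_of_nonneg_right hc hB2
          linarith
        calc ∑ a ∈ pairsF n, ∑ b ∈ pairsF n,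
            (if a = b then r * (1 - r) ^ (2 * n - 4) else r ^ 2 * (1 - r) ^ (4 * n - 12))
            ≤ ∑ a ∈ pairsF n, (r * (1 - r) ^ (2 * n - 4)
                + ((pairsF n).card : ℝ) * (r ^ 2 * (1 - r) ^ (4 * n - 12))) :=
              Finset.sum_le_sum inner
          _ = ((pairsF n).card : ℝ) * (r * (1 - r) ^ (2 * n - 4))
              + ((pairsF n).card : ℝ) ^ 2 * (r ^ 2 * (1 - r) ^ (4 * n - 12)) := by
              rw [Finset.sum_const, nsmul_eq_mul]; ring

lemma chebyshev {n : ℕ} {r : ℝ} (hr0 : 0 ≤ r) (hr1 : r ≤ 1) {t : ℝ}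
    (ht : t ≤ ∑ f : Sym2 (Fin n) → Bool, wR n r f * (XI f : ℝ)) :
    (∑ f : Sym2 (Fin n) → Bool, wR n r f * (XI f : ℝ) - t) ^ 2
        * ∑ f ∈ Finset.univ.filter (fun f => (XI f : ℝ) < t), wR n r f
      ≤ ∑ f : Sym2 (Fin n) → Bool, wR n r f * (XI f : ℝ) ^ 2
        - (∑ f : Sym2 (Fin n) → Bool, wR n r f * (XI f : ℝ)) ^ 2 := by
  set S1 := ∑ f : Sym2 (Fin n) → Bool, wR n r f * (XI f : ℝ) with hS1
  have key : ∀ f ∈ Finset.univ.filter (fun f : Sym2 (Fin n) → Bool => (XI f : ℝ) < t),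
      (S1 - t) ^ 2 * wR n r f ≤ wR n r f * (S1 - (XI f : ℝ)) ^ 2 := by
    intro f hf
    have hXf : (XI f : ℝ) < t := (Finset.mem_filter.mp hf).2
    rw [mul_comm]
    apply mul_le_mul_of_nonneg_left _ (wR_nonneg hr0 hr1 f)
    apply pow_le_pow_left₀ (by linarith) (by linarith)
  calc (S1 - t) ^ 2 * ∑ f ∈ Finset.univ.filter (fun f => (XI f : ℝ) < t), wR n r f
      = ∑ f ∈ Finset.univ.filter (fun f : Sym2 (Fin n) → Bool => (XI f : ℝ) < t),
          (S1 - t) ^ 2 * wR n r f := by rw [Finset.mul_sum]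
    _ ≤ ∑ f ∈ Finset.univ.filter (fun f : Sym2 (Fin n) → Bool => (XI f : ℝ) < t),
          wR n r f * (S1 - (XI f : ℝ)) ^ 2 := Finset.sum_le_sum key
    _ ≤ ∑ f : Sym2 (Fin n) → Bool, wR n r f * (S1 - (XI f : ℝ)) ^ 2 :=
        Finset.sum_le_sum_of_subset_of_nonneg (Finset.filter_subset _ _)
          (fun f _ _ => mul_nonneg (wR_nonneg hr0 hr1 f) (sq_nonneg _))
    _ = S1 ^ 2 * (∑ f : Sym2 (Fin n) → Bool, wR n r f)
        - 2 * S1 * (∑ f : Sym2 (Fin n) → Bool, wR n r f * (XI f : ℝ))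
        + ∑ f : Sym2 (Fin n) → Bool, wR n r f * (XI f : ℝ) ^ 2 := by
        rw [Finset.mul_sum, Finset.mul_sum, ← Finset.sum_sub_distrib, ← Finset.sum_add_distrib]
        exact Finset.sum_congr rfl fun f _ => by ring
    _ = ∑ f : Sym2 (Fin n) → Bool, wR n r f * (XI f : ℝ) ^ 2 - S1 ^ 2 := by
        rw [wR_total hr0 hr1, ← hS1]; ring


lemma card_pairsF (n : ℕ) : 2 * (pairsF n).card = n * n - n := by
  classical
  have hswap : ((Finset.univ : Finset (Fin n × Fin n)).filter fun a => a.2 < a.1).card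
      = (pairsF n).card := by
    apply Finset.card_bij (fun a _ => Prod.swap a)
    · intro a ha
      simp only [pairsF, Finset.mem_filter, Finset.mem_univ, true_and] at *
      exact ha
    · intro a _ b _ h
      exact Prod.swap_injective h
    · intro b hb
      refine ⟨Prod.swap b, ?_, by simp⟩
      simp only [pairsF, Finset.mem_filter, Finset.mem_univ, true_and] at *
      exact hb
  have hunion : (pairsF n) ∪ ((Finset.univ : Finset (Fin n × Fin n)).filter fun a => a.2 < a.1)
      = Finset.univ.offDiag := by
    ext a
    simp only [pairsF, Finset.mem_union, Finset.mem_filter, Finset.mem_univ, true_and,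
      Finset.mem_offDiag]
    constructor
    · rintro (h | h)
      · exact ne_of_lt h
      · exact (ne_of_lt h).symm
    · intro h
      rcases lt_or_gt_of_ne h with h' | h'
      · exact Or.inl h'
      · exact Or.inr h'
  have hdisj : Disjoint (pairsF n)
      ((Finset.univ : Finset (Fin n × Fin n)).filter fun a => a.2 < a.1) := by
    rw [Finset.disjoint_left]
    intro a ha hb
    have h1 := (Finset.mem_filter.mp ha).2
    have h2 := (Finset.mem_filter.mp hb).2
    exact absurd h2 (asymm h1)
  have hcard := Finset.card_union_of_disjoint hdisj
  rw [hunion, Finset.offDiag_card, hswap] at hcard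
  simp only [Finset.card_univ, Fintype.card_fin] at hcard
  omega

lemma one_sub_ge_exp {x : ℝ} (h0 : 0 ≤ x) (h1 : x ≤ 1/2) : Real.exp (-2*x) ≤ 1 - x := by
  have he : 1 + 2*x ≤ Real.exp (2*x) := by
    have := Real.add_one_le_exp (2*x); linarith
  have hpos : (0:ℝ) < 1 + 2*x := by linarith
  have h2 : Real.exp (-2*x) = 1 / Real.exp (2*x) := by
    rw [show (-2:ℝ)*x = -(2*x) by ring, Real.exp_neg, inv_eq_one_div]
  rw [h2]
  rw [div_le_iff₀ (Real.exp_pos _)]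
  nlinarith [Real.exp_pos (2*x)]

lemma pow_ge_exp {x : ℝ} (h0 : 0 ≤ x) (h1 : x ≤ 1/2) (k : ℕ) :
    Real.exp (-2*x*k) ≤ (1 - x) ^ k := by
  have := one_sub_ge_exp h0 h1
  calc Real.exp (-2*x*k) = (Real.exp (-2*x))^k := by
        rw [← Real.exp_nat_mul]; ring_nf
    _ ≤ (1-x)^k := pow_le_pow_left₀ (Real.exp_pos _).le this k

set_option maxHeartbeats 2000000 in
lemma main_prob (c : ℝ) (hc : 0 < c) :
    ∀ n : ℕ, ⌈4*c⌉₊ + 12 ≤ n →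
      ∑ f ∈ Finset.univ.filter (fun f : Sym2 (Fin n) → Bool => (XI f : ℝ) < ((c/16) * Real.exp (-(4*c))) * n),
          wR n (c/n) f ≤
        ((c/2 + c^3) / (((c/8) * Real.exp (-(4*c)))^2)) / n := by
  set lc : ℝ := (c/4) * Real.exp (-(4*c)) with hlc
  have hlcpos : 0 < lc := by positivity
  intro n hn
  have hn12 : (12:ℕ) ≤ n := le_trans (by omega) hn
  have hnc : 4*c ≤ n := by
    have h1 : (⌈4*c⌉₊ : ℝ) ≤ n := by exact_mod_cast le_trans (by omega : ⌈4*c⌉₊ ≤ ⌈4*c⌉₊ + 12) hn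
    exact le_trans (Nat.le_ceil _) h1
  have hnpos : (0:ℝ) < n := by positivity
  set r : ℝ := c / n with hrdef
  have hr0 : 0 ≤ r := by positivity
  have hrhalf : r ≤ 1/2 := by
    rw [hrdef, div_le_iff₀ hnpos]; nlinarith
  have hr1 : r ≤ 1 := by linarith
  set pc : ℝ := ((pairsF n).card : ℝ) with hpc
  have hpcnn : (0:ℝ) ≤ pc := by rw [hpc]; exact Nat.cast_nonneg _
  have hpc2 : 2 * pc = (n:ℝ)*n - n := by
    have h := card_pairsF n
    have hle : n ≤ n*n := Nat.le_mul_of_pos_left n (by omega)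
    have hcast : ((2 * (pairsF n).card : ℕ) : ℝ) = ((n*n - n : ℕ) : ℝ) := by rw [h]
    rw [Nat.cast_sub hle] at hcast
    push_cast at hcast
    rw [hpc]
    linarith
  have hn12R : (12:ℝ) ≤ (n:ℝ) := by exact_mod_cast hn12
  have hpcub : pc ≤ (n:ℝ)*n/2 := by nlinarith
  have hpclb : (n:ℝ)*n/4 ≤ pc := by nlinarith
  set Ec : ℝ := Real.exp (-(4*c)) with hEc
  have hEcpos : 0 < Ec := Real.exp_pos _
  have hEc1 : Ec ≤ 1 := by
    rw [hEc, ← Real.exp_zero]; exact Real.exp_le_exp.mpr (by nlinarith)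
  -- lower bound on the power
  have hpow : Ec ≤ (1 - r) ^ (2*n - 4) := by
    refine le_trans ?_ (pow_ge_exp hr0 hrhalf (2*n-4))
    apply Real.exp_le_exp.mpr
    have hcast : ((2*n - 4 : ℕ):ℝ) ≤ 2*(n:ℝ) := by
      have : (2*n - 4 : ℕ) ≤ 2*n := by omega
      calc ((2*n - 4 : ℕ):ℝ) ≤ ((2*n : ℕ):ℝ) := by exact_mod_cast this
        _ = 2*(n:ℝ) := by push_cast; ring
    have : r * ((2*n - 4 : ℕ):ℝ) ≤ 2*c := by
      rw [hrdef]
      rw [div_mul_eq_mul_div, div_le_iff₀ hnpos]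
      nlinarith
    nlinarith
  set S1 : ℝ := ∑ f : Sym2 (Fin n) → Bool, wR n r f * (XI f : ℝ) with hS1def
  have hS1 : S1 = pc * (r * (1 - r) ^ (2 * n - 4)) := S1_eq hr0 hr1
  have hponn : (0:ℝ) ≤ (1 - r) ^ (2*n-4) := pow_nonneg (by linarith) _
  have hS1lb : lc * n ≤ S1 := by
    rw [hS1, hlc]
    have h1 : (n:ℝ)*n/4 * (r * Ec) ≤ pc * (r * (1 - r) ^ (2 * n - 4)) := by
      apply mul_le_mul hpclb (mul_le_mul_of_nonneg_left hpow hr0)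
        (mul_nonneg hr0 hEcpos.le) hpcnn
    have h2 : (n:ℝ)*n/4 * (r * Ec) = c/4 * Ec * n := by
      rw [hrdef]; field_simp
    linarith
  have hS1ub : S1 ≤ c * n / 2 := by
    rw [hS1]
    have h1 : (1 - r) ^ (2*n-4) ≤ 1 := pow_le_one₀ (by linarith) (by linarith)
    have : pc * (r * (1 - r) ^ (2 * n - 4)) ≤ pc * r :=
      mul_le_mul_of_nonneg_left (by nlinarith) hpcnn
    have h2 : pc * r ≤ (n:ℝ)*n/2 * (c/n) := by
      apply mul_le_mul hpcub le_rfl hr0 (by positivity)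
    have h3 : (n:ℝ)*n/2 * (c/n) = c*n/2 := by field_simp
    linarith
  set t : ℝ := ((c/16) * Ec) * n with ht
  have htlc : t = lc/4 * n := by rw [ht, hlc]; ring
  have htS1 : t ≤ S1 := by
    rw [htlc]
    nlinarith
  have hgap : lc/2 * n ≤ S1 - t := by rw [htlc]; nlinarith
  -- variance bound
  have hvar : ∑ f : Sym2 (Fin n) → Bool, wR n r f * (XI f : ℝ) ^ 2 - S1^2
      ≤ (c/2 + c^3) * n := by
    have h2 := S2_bound (n := n) hr0 hr1
    have hS1sq : S1^2 = pc^2 * (r^2 * ((1 - r) ^ (4*n-8))) := by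
      rw [hS1, show 4*n-8 = (2*n-4) + (2*n-4) by omega, pow_add]
      ring
    have hsplit : (1 - r) ^ (4*n-12) * (1-r)^4 = (1 - r) ^ (4*n-8) := by
      rw [← pow_add]
      congr 1
      omega
    have hfour : 1 - (1-r)^4 ≤ 4*r := by nlinarith
    have hm : pc^2 * (r^2 * (1 - r) ^ (4*n-12)) - pc^2 * (r^2 * ((1 - r) ^ (4*n-8)))
        ≤ pc^2 * r^2 * (4*r) := by
      have hpw : (0:ℝ) ≤ (1-r)^(4*n-12) := pow_nonneg (by linarith) _
      have hpw1 : (1-r)^(4*n-12) ≤ 1 := pow_le_one₀ (by linarith) (by linarith)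
      have expand : pc^2 * (r^2 * (1 - r) ^ (4*n-12)) - pc^2 * (r^2 * ((1 - r) ^ (4*n-8)))
          = pc^2 * r^2 * ((1-r)^(4*n-12) * (1 - (1-r)^4)) := by
        rw [← hsplit]; ring
      rw [expand]
      have : (1-r)^(4*n-12) * (1 - (1-r)^4) ≤ 4*r := by nlinarith
      exact mul_le_mul_of_nonneg_left this (mul_nonneg (sq_nonneg pc) (sq_nonneg r))
    have hterm : pc^2 * r^2 * (4*r) ≤ c^3 * n := by
      have : pc^2 * r^2 * (4*r) = 4 * (pc*r)^2 * r := by ring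
      rw [this]
      have hpcr : pc * r ≤ c*n/2 := by
        have h2 : pc * r ≤ (n:ℝ)*n/2 * (c/n) := mul_le_mul hpcub le_rfl hr0 (by positivity)
        have h3 : (n:ℝ)*n/2 * (c/n) = c*n/2 := by field_simp
        linarith
      have hpcrnn : 0 ≤ pc * r := mul_nonneg hpcnn hr0
      have : 4 * (pc*r)^2 * r ≤ 4 * (c*n/2)^2 * (c/n) := by
        apply mul_le_mul (by nlinarith) le_rfl hr0 (by positivity)
      have heq : 4 * (c*n/2)^2 * (c/n) = c^3 * n := by field_simp; ring
      linarith
    nlinarith [hS1ub]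
  -- chebyshev
  have hcheb := chebyshev (n := n) hr0 hr1 (t := t) htS1
  rw [← hS1def] at hcheb
  set bad : ℝ := ∑ f ∈ Finset.univ.filter
      (fun f : Sym2 (Fin n) → Bool => (XI f : ℝ) < t), wR n r f with hbad
  have hbadnn : 0 ≤ bad := Finset.sum_nonneg fun f _ => wR_nonneg hr0 hr1 f
  have hgapsq : (lc/2 * n)^2 * bad ≤ (S1 - t)^2 * bad := by
    apply mul_le_mul_of_nonneg_right _ hbadnn
    apply pow_le_pow_left₀ (by positivity) hgap
  have hfinal : (lc/2 * n)^2 * bad ≤ (c/2 + c^3) * n := by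
    calc (lc/2 * n)^2 * bad ≤ (S1 - t)^2 * bad := hgapsq
      _ ≤ _ := hcheb
      _ ≤ (c/2 + c^3) * n := hvar
  have hdiv : bad ≤ ((c/2 + c^3) / ((lc/2)^2)) / n := by
    have hlcn : (0:ℝ) < (lc/2)^2 * n := mul_pos (pow_pos (by linarith) 2) hnpos
    rw [div_div, le_div_iff₀ hlcn]
    apply le_of_mul_le_mul_right _ hnpos
    have h2 : bad * ((lc/2)^2 * n) * n = (lc/2*n)^2 * bad := by ring
    rw [h2]
    exact hfinal
  have hq : ((c/8) * Ec)^2 = (lc/2)^2 := by rw [hlc]; ring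
  rw [hq]
  exact hdiv


lemma iso_false {n : ℕ} {f : Sym2 (Fin n) → Bool} {u v : Fin n}
    (h : IsoP f u v) (huv : u ≠ v) : f s(u, v) = false := by
  have := h s(u, v) (spair_mem_Tpair huv)
  simpa [gpair] using this

lemma iso_true {n : ℕ} {f : Sym2 (Fin n) → Bool} {u v : Fin n}
    (h : IsoP f u v) (huv : u ≠ v) {a w : Fin n}
    (ha : a = u ∨ a = v) (hwu : w ≠ u) (hwv : w ≠ v) : f s(a, w) = true := by
  have hmem : s(a, w) ∈ Tpair u v := by
    refine mem_Tpair.mpr ⟨?_, ?_⟩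
    · rw [Sym2.mk_isDiag_iff]
      rintro rfl
      rcases ha with rfl | rfl
      · exact hwu rfl
      · exact hwv rfl
    · rcases ha with rfl | rfl
      · exact Or.inl (by simp)
      · exact Or.inr (by simp)
  have hne : s(a, w) ≠ s(u, v) := by
    intro hh
    rcases Sym2.eq_iff.mp hh with ⟨h1, h2⟩ | ⟨h1, h2⟩
    · exact hwv h2
    · exact hwu h2
  have := h s(a, w) hmem
  simpa [gpair, hne] using this

lemma iso_disjoint {n : ℕ} {f : Sym2 (Fin n) → Bool} {u v x y : Fin n}
    (h1 : IsoP f u v) (h2 : IsoP f x y) (huv : u < v) (hxy : x < y)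
    (hne : (u, v) ≠ (x, y)) : u ≠ x ∧ u ≠ y ∧ v ≠ x ∧ v ≠ y := by
  have hsne : s(u, v) ≠ s(x, y) := by
    intro h
    rcases Sym2.eq_iff.mp h with ⟨e1, e2⟩ | ⟨e1, e2⟩
    · exact hne (Prod.ext e1 e2)
    · rw [e1, e2] at huv; exact absurd hxy (asymm huv)
  by_contra hcon
  push_neg at hcon
  -- derive that the pairs share a vertex, contradiction via f s(u,v)
  have hfalse : f s(u, v) = false := iso_false h1 (ne_of_lt huv)
  have hmem : s(u, v) ∈ Tpair x y := by
    refine mem_Tpair.mpr ⟨by rw [Sym2.mk_isDiag_iff]; exact ne_of_lt huv, ?_⟩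
    by_cases hux : u = x
    · exact Or.inl (by rw [← hux]; simp)
    by_cases huy : u = y
    · exact Or.inr (by rw [← huy]; simp)
    by_cases hvx : v = x
    · exact Or.inl (by rw [← hvx]; simp)
    · have hvy := hcon hux huy hvx
      exact Or.inr (by rw [← hvy]; simp)
  have htrue : f s(u, v) = true := by
    have := h2 s(u, v) hmem
    simpa [gpair, hsne] using this
  rw [hfalse] at htrue
  exact Bool.false_ne_true htrue

lemma erGraph_adj {n : ℕ} {f : Sym2 (Fin n) → Bool} {a b : Fin n} :
    (erGraph n f).Adj a b ↔ a ≠ b ∧ f s(a, b) = true := by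
  rw [erGraph, SimpleGraph.fromRel_adj]
  constructor
  · rintro ⟨hab, h | h⟩
    · exact ⟨hab, h⟩
    · exact ⟨hab, by rwa [Sym2.eq_swap]⟩
  · rintro ⟨hab, h⟩
    exact ⟨hab, Or.inl h⟩

lemma exists_max_clique {n : ℕ} (G : SimpleGraph (Fin n)) (s : Finset (Fin n))
    (hs : G.IsClique ↑s) : ∃ t, s ⊆ t ∧ IsMaxClique G t := by
  classical
  set C : Finset (Finset (Fin n)) :=
    Finset.univ.filter (fun t => G.IsClique ↑t ∧ s ⊆ t) with hC
  have hsC : s ∈ C := by simp [hC, hs]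
  obtain ⟨t, htC, hmax⟩ := Finset.exists_max_image C Finset.card ⟨s, hsC⟩
  have htp := (Finset.mem_filter.mp htC).2
  refine ⟨t, htp.2, htp.1, ?_⟩
  intro t' ht' hsub
  apply Finset.eq_of_subset_of_card_le hsub
  exact hmax t' (by simp [hC, ht', htp.2.trans hsub])

lemma count_ge {n : ℕ} (f : Sym2 (Fin n) → Bool) :
    2 ^ (XI f) ≤ maxCliqueCount n f := by
  classical
  set F : Finset (Fin n × Fin n) := (pairsF n).filter (fun a => IsoP f a.1 a.2) with hF
  have hFiso : ∀ p ∈ F, IsoP f p.1 p.2 ∧ p.1 < p.2 := by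
    intro p hp
    have h1 := (Finset.mem_filter.mp hp).2
    have h2 := (Finset.mem_filter.mp (Finset.mem_filter.mp hp).1).2
    exact ⟨h1, h2⟩
  -- base clique for a subset T of F
  have hbase : ∀ T ∈ F.powerset,
      (erGraph n f).IsClique ↑(T.image Prod.snd ∪ (F \ T).image Prod.fst) := by
    intro T hT
    have hTF : T ⊆ F := Finset.mem_powerset.mp hT
    intro a ha b hb hab
    simp only [Finset.coe_union, Set.mem_union, Finset.coe_image, Set.mem_image,
      Finset.mem_coe] at ha hb
    -- extract pair and membership
    obtain ⟨p, hpF, hpa, hpT⟩ : ∃ p, p ∈ F ∧ (a = p.1 ∨ a = p.2) ∧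
        ((a = p.2 ∧ p ∈ T) ∨ (a = p.1 ∧ p ∉ T)) := by
      rcases ha with ⟨p, hp, rfl⟩ | ⟨p, hp, rfl⟩
      · exact ⟨p, hTF hp, Or.inr rfl, Or.inl ⟨rfl, hp⟩⟩
      · exact ⟨p, (Finset.mem_sdiff.mp hp).1, Or.inl rfl,
          Or.inr ⟨rfl, (Finset.mem_sdiff.mp hp).2⟩⟩
    obtain ⟨q, hqF, hqb, hqT⟩ : ∃ q, q ∈ F ∧ (b = q.1 ∨ b = q.2) ∧
        ((b = q.2 ∧ q ∈ T) ∨ (b = q.1 ∧ q ∉ T)) := by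
      rcases hb with ⟨q, hq, rfl⟩ | ⟨q, hq, rfl⟩
      · exact ⟨q, hTF hq, Or.inr rfl, Or.inl ⟨rfl, hq⟩⟩
      · exact ⟨q, (Finset.mem_sdiff.mp hq).1, Or.inl rfl,
          Or.inr ⟨rfl, (Finset.mem_sdiff.mp hq).2⟩⟩
    rw [erGraph_adj]
    refine ⟨hab, ?_⟩
    by_cases hpq : p = q
    · -- same pair: impossible since they'd be the same chosen endpoint
      subst hpq
      exfalso
      rcases hpT with ⟨ha2, hin⟩ | ⟨ha1, hout⟩ <;> rcases hqT with ⟨hb2, hin'⟩ | ⟨hb1, hout'⟩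
      · exact hab (ha2.trans hb2.symm)
      · exact hout' hin
      · exact hout hin'
      · exact hab (ha1.trans hb1.symm)
    · have hd := iso_disjoint (hFiso p hpF).1 (hFiso q hqF).1 (hFiso p hpF).2
        (hFiso q hqF).2 (fun h => hpq h)
      have hb1 : b ≠ p.1 ∧ b ≠ p.2 := by
        rcases hqb with rfl | rfl
        · exact ⟨fun h => hd.1 h.symm, fun h => hd.2.2.1 h.symm⟩
        · exact ⟨fun h => hd.2.1 h.symm, fun h => hd.2.2.2 h.symm⟩
      exact iso_true (hFiso p hpF).1 (ne_of_lt (hFiso p hpF).2) hpa hb1.1 hb1.2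
  -- the injection into maximal cliques
  let φ : {T // T ∈ F.powerset} → {s : Finset (Fin n) // IsMaxClique (erGraph n f) s} :=
    fun T => ⟨(exists_max_clique (erGraph n f) _ (hbase T.1 T.2)).choose,
      (exists_max_clique (erGraph n f) _ (hbase T.1 T.2)).choose_spec.2⟩
  have hsubφ : ∀ T : {T // T ∈ F.powerset},
      (T.1.image Prod.snd ∪ (F \ T.1).image Prod.fst) ⊆ (φ T).1 :=
    fun T => (exists_max_clique (erGraph n f) _ (hbase T.1 T.2)).choose_spec.1
  have hkey : ∀ (T T' : {T // T ∈ F.powerset}) (p : Fin n × Fin n),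
      p ∈ T.1 → p ∉ T'.1 → φ T ≠ φ T' := by
    intro T T' p hpT hpT' heq
    have hpF : p ∈ F := (Finset.mem_powerset.mp T.2) hpT
    have h2 : p.2 ∈ (φ T).1 := hsubφ T (Finset.mem_union_left _
      (Finset.mem_image.mpr ⟨p, hpT, rfl⟩))
    have h1 : p.1 ∈ (φ T').1 := hsubφ T' (Finset.mem_union_right _
      (Finset.mem_image.mpr ⟨p, Finset.mem_sdiff.mpr ⟨hpF, hpT'⟩, rfl⟩))
    rw [heq] at h2
    have hlt := (hFiso p hpF).2
    have hadj := ((φ T').2.1 h1 h2 (ne_of_lt hlt))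
    rw [erGraph_adj] at hadj
    have := iso_false (hFiso p hpF).1 (ne_of_lt hlt)
    rw [hadj.2] at this
    simp at this
  have hinj : Function.Injective φ := by
    intro T T' heq
    by_contra hne
    have hne' : T.1 ≠ T'.1 := fun h => hne (Subtype.ext h)
    have : ∃ p, (p ∈ T.1 ∧ p ∉ T'.1) ∨ (p ∈ T'.1 ∧ p ∉ T.1) := by
      by_contra hp
      push_neg at hp
      apply hne'
      ext p
      have := hp p
      tauto
    obtain ⟨p, hp | hp⟩ := this
    · exact hkey T T' p hp.1 hp.2 heq
    · exact hkey T' T p hp.1 hp.2 heq.symm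
  have hcard : 2 ^ (XI f) = Fintype.card {T // T ∈ F.powerset} := by
    rw [Fintype.card_coe, Finset.card_powerset, hF]
    rfl
  rw [maxCliqueCount, Nat.card_eq_fintype_card, hcard]
  exact Fintype.card_le_of_injective φ hinj


/-- For every `c > 0` there are `ζ > 0` and a threshold `n'` such that for `n ≥ n'`,
with high probability `G(n, 1 - c/n)` contains at least `2^{ζn}` maximal cliques. -/
theorem stmt8 (c : ℝ) (hc : 0 < c) :
    ∃ ζ : ℝ, 0 < ζ ∧
      Tendsto (fun n : ℕ =>
          erMeasure n (ENNReal.ofReal (1 - c / n))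
            (ENNReal.ofReal_le_one.mpr (by
              have : 0 ≤ c / n := div_nonneg hc.le (Nat.cast_nonneg n)
              linarith))
            {f | (2 : ℝ) ^ (ζ * n) ≤ (maxCliqueCount n f : ℝ)})
        atTop (𝓝 1) := by
  classical
  set ζ : ℝ := (c/16) * Real.exp (-(4*c)) with hζ
  have hζpos : 0 < ζ := by positivity
  refine ⟨ζ, hζpos, ?_⟩
  set K : ℝ := ((c/2 + c^3) / (((c/8) * Real.exp (-(4*c)))^2)) with hK
  set n₀ : ℕ := ⌈4*c⌉₊ + 12 with hn₀
  -- notation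
  set μ : ∀ n : ℕ, Measure (Sym2 (Fin n) → Bool) := fun n =>
    erMeasure n (ENNReal.ofReal (1 - c / n))
      (ENNReal.ofReal_le_one.mpr (by
        have : 0 ≤ c / (n:ℝ) := div_nonneg hc.le (Nat.cast_nonneg n)
        linarith)) with hμ
  have hbound : ∀ n : ℕ, n₀ ≤ n →
      1 - ENNReal.ofReal (K / n) ≤
        μ n {f | (2 : ℝ) ^ (ζ * n) ≤ (maxCliqueCount n f : ℝ)} := by
    intro n hn
    have hnpos : (0:ℝ) < n := by
      have : (12:ℕ) ≤ n := le_trans (by omega) hn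
      exact_mod_cast lt_of_lt_of_le (by norm_num : (0:ℕ) < 12) this
    have hr0 : (0:ℝ) ≤ c / n := div_nonneg hc.le (Nat.cast_nonneg n)
    have hr1 : c / n ≤ 1 := by
      rw [div_le_one hnpos]
      have h1 : (⌈4*c⌉₊ : ℝ) ≤ n := by
        exact_mod_cast le_trans (by omega : ⌈4*c⌉₊ ≤ n₀) hn
      have := Nat.le_ceil (4*c)
      nlinarith
    -- the bad set
    set B : Set (Sym2 (Fin n) → Bool) := {f | (XI f : ℝ) < ζ * n} with hB
    have hBmeas : MeasurableSet B := (Set.to_countable B).measurableSet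
    have hBfin : B = ↑(Finset.univ.filter (fun f : Sym2 (Fin n) → Bool => (XI f : ℝ) < ζ * n)) := by
      ext f; simp [hB]
    have hμB : μ n B ≤ ENNReal.ofReal (K / n) := by
      rw [hμ, hBfin]
      rw [meas_finset hr0 hr1]
      exact ENNReal.ofReal_le_ofReal (main_prob c hc n hn)
    -- complement of bad is inside the good event
    have hsub : Bᶜ ⊆ {f : Sym2 (Fin n) → Bool | (2 : ℝ) ^ (ζ * n) ≤ (maxCliqueCount n f : ℝ)} := by
      intro f hf
      simp only [hB, Set.mem_compl_iff, Set.mem_setOf_eq, not_lt] at hf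
      have h1 : (2:ℝ) ^ (ζ * (n:ℝ)) ≤ (2:ℝ) ^ ((XI f : ℝ)) :=
        Real.rpow_le_rpow_of_exponent_le one_le_two hf
      have h2 : (2:ℝ) ^ ((XI f : ℝ)) = ((2 ^ (XI f) : ℕ) : ℝ) := by
        rw [Real.rpow_natCast]
        push_cast
        ring
      have h3 : ((2 ^ (XI f) : ℕ) : ℝ) ≤ (maxCliqueCount n f : ℝ) := by
        exact_mod_cast count_ge f
      simp only [Set.mem_setOf_eq]
      linarith
    calc 1 - ENNReal.ofReal (K / n) ≤ 1 - μ n B := by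
          exact tsub_le_tsub_left hμB 1
      _ = μ n Bᶜ := by
          rw [measure_compl hBmeas (measure_ne_top _ _), measure_univ]
      _ ≤ μ n {f : Sym2 (Fin n) → Bool | (2 : ℝ) ^ (ζ * n) ≤ (maxCliqueCount n f : ℝ)} :=
          measure_mono hsub
  -- squeeze
  have hlow : Tendsto (fun n : ℕ => 1 - ENNReal.ofReal (K / n)) atTop (𝓝 1) := by
    have h0 : Tendsto (fun n : ℕ => ENNReal.ofReal (K / n)) atTop (𝓝 0) := by
      rw [show (0:ℝ≥0∞) = ENNReal.ofReal 0 by simp]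
      exact ENNReal.tendsto_ofReal (tendsto_const_div_atTop_nhds_zero_nat K)
    have := ENNReal.Tendsto.sub (tendsto_const_nhds (x := (1:ℝ≥0∞))) h0 (Or.inl ENNReal.one_ne_top)
    simpa using this
  refine tendsto_of_tendsto_of_tendsto_of_le_of_le' hlow tendsto_const_nhds ?_ ?_
  · exact eventually_atTop.mpr ⟨n₀, hbound⟩
  · exact Eventually.of_forall fun n => prob_le_one
end
end

section
/- Consider the d-dimensional torus with the maximum norm and evenly spaced boxes B_1,...,B_{2k} of height h and gap g (so 2k(g+h) = 1), where B_i = [(i-1)(g+h), (i-1)(g+h)+h] × [0, 1/2 - g]^{d-1}. Suppose vertices v_1,...,v_{2k} with v_i ∈ B_i all have weight in the interval [w_ℓ, w_u) with w_ℓ = (1/2 - g)^{d/2} √(μn) and w_u = (1/2 - h)^{d/2} √(μn). In the threshold GIRG connection rule (u and v adjacent iff w_u w_v ≥ μ n ‖x_u - x_v‖^d), these 2k vertices induce a co-matching: v_i and v_j are adjacent if and only if |i - j| ≠ k. -/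
open Finset

noncomputable section

/-- Distance on the circle ℝ/ℤ between representatives in `[0,1)`. -/
def torusDist (x y : ℝ) : ℝ := min |x - y| (1 - |x - y|)

/-- Max-norm distance on the `d`-dimensional torus. -/
def torusDistSup {d : ℕ} (x y : Fin d → ℝ) : ℝ := ⨆ i, torusDist (x i) (y i)

lemma torusDist_comm' (x y : ℝ) : torusDist x y = torusDist y x := by
  unfold torusDist; rw [abs_sub_comm]

lemma torusDistSup_comm' {d : ℕ} (x y : Fin d → ℝ) :
    torusDistSup x y = torusDistSup y x := by
  unfold torusDistSup
  exact iSup_congr fun i => torusDist_comm' _ _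

lemma aux_coord (g h : ℝ) (k : ℕ) (hh : 0 < h) (hgh : h < g)
    (hsum : 2 * (k:ℝ) * (g + h) = 1)
    (i j : ℕ) (hji : j < i) (hi : i < 2*k) (a b : ℝ)
    (ha1 : (i:ℝ)*(g+h) ≤ a) (ha2 : a ≤ (i:ℝ)*(g+h)+h)
    (hb1 : (j:ℝ)*(g+h) ≤ b) (hb2 : b ≤ (j:ℝ)*(g+h)+h) :
    0 ≤ torusDist a b ∧
    (i - j = k → 1/2 - h ≤ torusDist a b) ∧
    (i - j ≠ k → torusDist a b ≤ 1/2 - g) := by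
  set m := i - j with hmdef
  have hP : (0:ℝ) < g + h := by linarith
  have hmi : i = j + m := by omega
  have hmR : (i:ℝ) = (j:ℝ) + (m:ℝ) := by exact_mod_cast congrArg (Nat.cast : ℕ → ℝ) hmi
  have key : (i:ℝ)*(g+h) - (j:ℝ)*(g+h) = (m:ℝ)*(g+h) := by rw [hmR]; ring
  have hm1 : (1:ℝ) ≤ (m:ℝ) := by exact_mod_cast Nat.one_le_iff_ne_zero.2 (by omega)
  have hm2 : (m:ℝ) + 1 ≤ 2*(k:ℝ) := by exact_mod_cast (by omega : m + 1 ≤ 2*k)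
  have hδlo : (m:ℝ)*(g+h) - h ≤ a - b := by linarith
  have hδhi : a - b ≤ (m:ℝ)*(g+h) + h := by linarith
  have hmul1 : 1*(g+h) ≤ (m:ℝ)*(g+h) := mul_le_mul_of_nonneg_right hm1 hP.le
  have hmul2 : (m:ℝ)*(g+h) ≤ (2*(k:ℝ)-1)*(g+h) :=
    mul_le_mul_of_nonneg_right (by linarith) hP.le
  have e1 : (2*(k:ℝ)-1)*(g+h) = 1 - (g+h) := by rw [sub_mul, one_mul]; linarith
  have hδpos : 0 < a - b := by linarith
  have hδ1 : a - b ≤ 1 - g := by linarith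
  have habs : |a - b| = a - b := abs_of_pos hδpos
  unfold torusDist
  rw [habs]
  have hkR : (k:ℝ)*(g+h) = 1/2 := by linarith
  refine ⟨le_min hδpos.le (by linarith), ?_, ?_⟩
  · intro hmk
    have hmkR : (m:ℝ) = (k:ℝ) := by exact_mod_cast hmk
    rw [hmkR] at hδlo hδhi
    exact le_min (by linarith) (by linarith)
  · intro hmk
    rcases lt_or_gt_of_ne hmk with hlt | hgt
    · have hm3 : (m:ℝ) + 1 ≤ (k:ℝ) := by exact_mod_cast (by omega : m + 1 ≤ k)
      have hmul3 : (m:ℝ)*(g+h) ≤ ((k:ℝ)-1)*(g+h) :=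
        mul_le_mul_of_nonneg_right (by linarith) hP.le
      have e2 : ((k:ℝ)-1)*(g+h) = 1/2 - (g+h) := by rw [sub_mul, one_mul]; linarith
      exact le_trans (min_le_left _ _) (by linarith)
    · have hm3 : (k:ℝ) + 1 ≤ (m:ℝ) := by exact_mod_cast (by omega : k + 1 ≤ m)
      have hmul3 : ((k:ℝ)+1)*(g+h) ≤ (m:ℝ)*(g+h) :=
        mul_le_mul_of_nonneg_right hm3 hP.le
      have e2 : ((k:ℝ)+1)*(g+h) = 1/2 + (g+h) := by rw [add_mul, one_mul]; linarith
      exact le_trans (min_le_right _ _) (by linarith)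

/-- Evenly spaced boxes of height `h` and gap `g` on the `d`-dimensional torus with the
max norm: if each box `B_i` contains a vertex `v_i` with weight in `[w_ℓ, w_u)`, then
under the threshold GIRG rule (`u ~ v` iff `w_u w_v ≥ μ n ‖x_u - x_v‖^d`) the vertices
`v_1, …, v_{2k}` induce a co-matching: `v_i ~ v_j` iff `|i - j| ≠ k`. -/
theorem stmt10 (d k n : ℕ) (hd : 0 < d) (hk : 0 < k) (hn : 0 < n)
    (μ g h : ℝ) (hμ : 0 < μ) (hh : 0 < h) (hgh : h < g) (hg2 : g < 1 / 2)
    (hsum : 2 * (k : ℝ) * (g + h) = 1)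
    (x : Fin (2 * k) → Fin d → ℝ) (w : Fin (2 * k) → ℝ)
    (hbox : ∀ i : Fin (2 * k),
      x i ⟨0, hd⟩ ∈ Set.Icc ((i : ℝ) * (g + h)) ((i : ℝ) * (g + h) + h) ∧
      ∀ l : Fin d, l ≠ ⟨0, hd⟩ → x i l ∈ Set.Icc (0 : ℝ) (1 / 2 - g))
    (hw : ∀ i : Fin (2 * k), w i ∈
      Set.Ico ((1 / 2 - g) ^ ((d : ℝ) / 2) * Real.sqrt (μ * n))
              ((1 / 2 - h) ^ ((d : ℝ) / 2) * Real.sqrt (μ * n))) :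
    ∀ i j : Fin (2 * k), i ≠ j →
      (μ * n * torusDistSup (x i) (x j) ^ d ≤ w i * w j ↔
        max (i : ℕ) (j : ℕ) - min (i : ℕ) (j : ℕ) ≠ k) := by
  haveI : Nonempty (Fin d) := ⟨⟨0, hd⟩⟩
  have hμn : (0:ℝ) < μ * n := by positivity
  set A := (1:ℝ)/2 - g with hA
  set B := (1:ℝ)/2 - h with hB
  have hA0 : 0 < A := by simp only [hA]; linarith
  have hB0 : 0 < B := by simp only [hB]; linarith
  set wl := A ^ ((d:ℝ)/2) * Real.sqrt (μ*n) with hwl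
  set wu := B ^ ((d:ℝ)/2) * Real.sqrt (μ*n) with hwu
  have hwl0 : 0 < wl := by
    have := Real.rpow_pos_of_pos hA0 ((d:ℝ)/2)
    have := Real.sqrt_pos.2 hμn
    positivity
  have hsq : ∀ C : ℝ, 0 < C →
      (C ^ ((d:ℝ)/2) * Real.sqrt (μ*n)) * (C ^ ((d:ℝ)/2) * Real.sqrt (μ*n))
        = μ * n * C ^ d := by
    intro C hC
    rw [mul_mul_mul_comm, ← Real.rpow_add hC, add_halves, Real.rpow_natCast,
      Real.mul_self_sqrt hμn.le]
    ring
  have hwlsq : wl * wl = μ * n * A ^ d := hsq A hA0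
  have hwusq : wu * wu = μ * n * B ^ d := hsq B hB0
  have main : ∀ i j : Fin (2*k), (j:ℕ) < (i:ℕ) →
      (μ * n * torusDistSup (x i) (x j) ^ d ≤ w i * w j ↔
        max (i:ℕ) (j:ℕ) - min (i:ℕ) (j:ℕ) ≠ k) := by
    intro i j hlt
    have hmaxmin : max (i:ℕ) (j:ℕ) - min (i:ℕ) (j:ℕ) = (i:ℕ) - (j:ℕ) := by omega
    obtain ⟨h0, hopp, hnon⟩ := aux_coord g h k hh hgh hsum (i:ℕ) (j:ℕ) hlt i.isLt
      (x i ⟨0, hd⟩) (x j ⟨0, hd⟩) (hbox i).1.1 (hbox i).1.2 (hbox j).1.1 (hbox j).1.2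
    set D := torusDistSup (x i) (x j) with hD
    have hbdd : BddAbove (Set.range fun l => torusDist (x i l) (x j l)) :=
      Set.Finite.bddAbove (Set.finite_range _)
    have hD0 : torusDist (x i ⟨0,hd⟩) (x j ⟨0,hd⟩) ≤ D := le_ciSup hbdd ⟨0, hd⟩
    have hDnn : 0 ≤ D := le_trans h0 hD0
    have hwbi := hw i
    have hwbj := hw j
    have hwinn : 0 ≤ w i := le_trans hwl0.le hwbi.1
    have hwjnn : 0 ≤ w j := le_trans hwl0.le hwbj.1
    rw [hmaxmin]
    by_cases hcase : (i:ℕ) - (j:ℕ) = k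
    · simp only [hcase, ne_eq, not_true_eq_false, iff_false, not_le]
      have hDB : B ≤ D := le_trans (hopp hcase) hD0
      calc w i * w j < wu * wu := mul_lt_mul'' hwbi.2 hwbj.2 hwinn hwjnn
        _ = μ * n * B ^ d := hwusq
        _ ≤ μ * n * D ^ d :=
            mul_le_mul_of_nonneg_left (pow_le_pow_left₀ hB0.le hDB d) hμn.le
    · simp only [ne_eq, hcase, not_false_eq_true, iff_true]
      have hDA : D ≤ A := by
        apply ciSup_le
        intro l
        by_cases hl : l = ⟨0, hd⟩
        · subst hl; exact hnon hcase
        · obtain ⟨h1, h2⟩ := (hbox i).2 l hl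
          obtain ⟨h1', h2'⟩ := (hbox j).2 l hl
          exact le_trans (min_le_left _ _) (abs_le.2 ⟨by linarith, by linarith⟩)
      calc μ * n * D ^ d ≤ μ * n * A ^ d :=
            mul_le_mul_of_nonneg_left (pow_le_pow_left₀ hDnn hDA d) hμn.le
        _ = wl * wl := hwlsq.symm
        _ ≤ w i * w j := mul_le_mul hwbi.1 hwbj.1 hwl0.le hwinn
  intro i j hij
  have hne : (i:ℕ) ≠ (j:ℕ) := fun e => hij (Fin.ext e)
  rcases hne.lt_or_gt with hlt | hlt
  · simpa [torusDistSup_comm' (x j) (x i), mul_comm (w j) (w i),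
      max_comm ((j:Fin (2*k)):ℕ) ((i:Fin (2*k)):ℕ), min_comm ((j:Fin (2*k)):ℕ) ((i:Fin (2*k)):ℕ)]
      using main j i hlt
  · exact main i j hlt
end
end

section
/- Let τ ∈ (2,3), μ > 0, and let x_1 ≤ x_2 ≤ ... ≤ x_k ≥ 1 be weights in an inhomogeneous random graph on n vertices where an additional vertex with Pareto(τ)-distributed weight w connects to a vertex of weight x with probability min(w x/(μn), 1). Then ∫_1^∞ w^{-τ} ∏_{i=1}^k min(w x_i/(μn), 1) dw ≤ C (μn)^{1-τ} x_1 x_2^{τ-2} for a constant C > 0 depending only on τ and k. -/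
open MeasureTheory Finset

lemma auxInt (τ : ℝ) (hτ2 : 2 < τ) (q : ℝ) (hq : 0 ≤ q) (c : ℝ) (hc : 0 < c) :
    IntegrableOn (fun w : ℝ => w ^ (1 - τ) * min (w * q) 1) (Set.Ioi c) := by
  have hbase : IntegrableOn (fun w : ℝ => w ^ (1 - τ)) (Set.Ioi c) :=
    integrableOn_Ioi_rpow_of_lt (by linarith) hc
  refine hbase.mono' ?_ ?_
  · apply Measurable.aestronglyMeasurable
    measurability
  · filter_upwards [ae_restrict_mem measurableSet_Ioi] with w hw
    have hw0 : 0 < w := hc.trans hw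
    have hmin0 : 0 ≤ min (w * q) 1 := le_min (mul_nonneg hw0.le hq) zero_le_one
    rw [Real.norm_eq_abs, abs_of_nonneg (mul_nonneg (Real.rpow_nonneg hw0.le _) hmin0)]
    exact mul_le_of_le_one_right (Real.rpow_nonneg hw0.le _) (min_le_right _ _)

lemma auxJ (τ : ℝ) (hτ2 : 2 < τ) (hτ3 : τ < 3) (q : ℝ) (hq : 0 < q) :
    (∫ w in Set.Ioi (1 : ℝ), w ^ (1 - τ) * min (w * q) 1) ≤
      (1 / (3 - τ) + 1 / (τ - 2)) * q ^ (τ - 2) := by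
  have h32 : (0:ℝ) < 3 - τ := by linarith
  have h2t : (0:ℝ) < τ - 2 := by linarith
  rcases le_or_gt 1 q with hq1 | hq1
  · -- min = 1 on Ioi 1
    have hcong : Set.EqOn (fun w : ℝ => w ^ (1 - τ) * min (w * q) 1)
        (fun w : ℝ => w ^ (1 - τ)) (Set.Ioi 1) := by
      intro w hw
      have hw1 : (1:ℝ) < w := hw
      have : (1:ℝ) ≤ w * q := by nlinarith
      simp only [min_eq_right this, mul_one]
    rw [setIntegral_congr_fun measurableSet_Ioi hcong,
      integral_Ioi_rpow_of_lt (by linarith) one_pos, Real.one_rpow]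
    have hq2 : (1:ℝ) ≤ q ^ (τ - 2) := Real.one_le_rpow hq1 (by linarith)
    have hCq : 1 / (τ - 2) ≤ (1 / (3 - τ) + 1 / (τ - 2)) * q ^ (τ - 2) := by
      have hC0 : 0 < 1 / (3 - τ) + 1 / (τ - 2) := by positivity
      nlinarith [one_div_pos.mpr h32, one_div_pos.mpr h2t]
    have : -1 / (1 - τ + 1) = 1 / (τ - 2) := by
      rw [div_eq_div_iff (by linarith) (by linarith)]; ring
    linarith [hCq, this.le, this.ge]
  · set t := q⁻¹ with ht
    have ht1 : 1 < t := (one_lt_inv₀ hq).mpr hq1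
    have ht0 : 0 < t := by linarith
    have htq : q ^ (τ - 2) = t ^ (2 - τ) := by
      have h : τ - 2 = -(2 - τ) := by ring
      rw [h, Real.rpow_neg hq.le, ht, Real.inv_rpow hq.le]
    have hint : IntegrableOn (fun w : ℝ => w ^ (1 - τ) * min (w * q) 1) (Set.Ioi 1) :=
      auxInt τ hτ2 q hq.le 1 one_pos
    have hi1 : IntegrableOn (fun w : ℝ => w ^ (1 - τ) * min (w * q) 1) (Set.Ioc 1 t) :=
      hint.mono_set Set.Ioc_subset_Ioi_self
    have hi2 : IntegrableOn (fun w : ℝ => w ^ (1 - τ) * min (w * q) 1) (Set.Ioi t) :=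
      auxInt τ hτ2 q hq.le t ht0
    have hsplit : (∫ w in Set.Ioi (1:ℝ), w ^ (1 - τ) * min (w * q) 1)
        = (∫ w in Set.Ioc (1:ℝ) t, w ^ (1 - τ) * min (w * q) 1)
          + ∫ w in Set.Ioi t, w ^ (1 - τ) * min (w * q) 1 := by
      rw [← Set.Ioc_union_Ioi_eq_Ioi ht1.le,
        setIntegral_union (Set.Ioc_disjoint_Ioi le_rfl) measurableSet_Ioi hi1 hi2]
    -- bound on Ioc 1 t
    have hInt2 : IntegrableOn (fun w : ℝ => q * w ^ (2 - τ)) (Set.Ioc 1 t) := by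
      have := (intervalIntegral.intervalIntegrable_rpow'
        (a := 1) (b := t) (r := 2 - τ) (by linarith)).const_mul q
      rwa [intervalIntegrable_iff_integrableOn_Ioc_of_le ht1.le] at this
    have hb1 : (∫ w in Set.Ioc (1:ℝ) t, w ^ (1 - τ) * min (w * q) 1)
        ≤ ∫ w in Set.Ioc (1:ℝ) t, q * w ^ (2 - τ) := by
      refine setIntegral_mono_on hi1 hInt2 measurableSet_Ioc ?_
      intro w hw
      have hw0 : 0 < w := lt_trans one_pos hw.1
      have h1 : w ^ (1 - τ) * min (w * q) 1 ≤ w ^ (1 - τ) * (w * q) :=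
        mul_le_mul_of_nonneg_left (min_le_left _ _) (Real.rpow_nonneg hw0.le _)
      have h2 : w ^ (2 - τ) = w ^ (1 - τ) * w := by
        rw [show (2 - τ) = (1 - τ) + 1 by ring, Real.rpow_add hw0, Real.rpow_one]
      calc w ^ (1 - τ) * min (w * q) 1 ≤ w ^ (1 - τ) * (w * q) := h1
        _ = q * w ^ (2 - τ) := by rw [h2]; ring
    have hc1 : (∫ w in Set.Ioc (1:ℝ) t, q * w ^ (2 - τ)) ≤ t ^ (2 - τ) / (3 - τ) := by
      rw [← intervalIntegral.integral_of_le ht1.le, intervalIntegral.integral_const_mul,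
        integral_rpow (Or.inl (by linarith : (-1:ℝ) < 2 - τ))]
      have h3 : (2 - τ) + 1 = 3 - τ := by ring
      rw [h3, Real.one_rpow]
      have ht3 : t ^ (2 - τ) = t ^ (3 - τ) * t⁻¹ := by
        rw [← Real.rpow_neg_one t, ← Real.rpow_add ht0]; congr 1; ring
      have hqt : q = t⁻¹ := by rw [ht, inv_inv]
      rw [hqt, ht3]
      have htpow : 0 < t ^ (3 - τ) := Real.rpow_pos_of_pos ht0 _
      have hti : 0 < t⁻¹ := inv_pos.mpr ht0
      have heq : t⁻¹ * ((t ^ (3 - τ) - 1) / (3 - τ))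
          = (t⁻¹ * (t ^ (3 - τ) - 1)) / (3 - τ) := by ring
      rw [heq, div_le_div_iff₀ h32 h32]
      nlinarith
    -- bound on Ioi t
    have hb2 : (∫ w in Set.Ioi t, w ^ (1 - τ) * min (w * q) 1)
        ≤ t ^ (2 - τ) / (τ - 2) := by
      have hbase : IntegrableOn (fun w : ℝ => w ^ (1 - τ)) (Set.Ioi t) :=
        integrableOn_Ioi_rpow_of_lt (by linarith) ht0
      have : (∫ w in Set.Ioi t, w ^ (1 - τ) * min (w * q) 1)
          ≤ ∫ w in Set.Ioi t, w ^ (1 - τ) := by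
        refine setIntegral_mono_on hi2 hbase measurableSet_Ioi ?_
        intro w hw
        have hw0 : 0 < w := ht0.trans hw
        exact mul_le_of_le_one_right (Real.rpow_nonneg hw0.le _) (min_le_right _ _)
      rw [integral_Ioi_rpow_of_lt (by linarith) ht0] at this
      have h4 : -t ^ (1 - τ + 1) / (1 - τ + 1) = t ^ (2 - τ) / (τ - 2) := by
        rw [show (1 - τ + 1) = 2 - τ by ring, div_eq_div_iff (by linarith) (by linarith)]; ring
      linarith [this, h4.le, h4.ge]
    rw [hsplit, htq]
    have := le_trans hb1 hc1
    have hfin : t ^ (2 - τ) / (3 - τ) + t ^ (2 - τ) / (τ - 2)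
        = (1 / (3 - τ) + 1 / (τ - 2)) * t ^ (2 - τ) := by ring
    linarith

/-- For `τ ∈ (2,3)` and `k ≥ 2` there is a constant `C > 0` (depending only on `τ, k`)
such that for ordered weights `1 ≤ x_1 ≤ … ≤ x_k`,
`∫_1^∞ w^{-τ} ∏_i min(w x_i/(μn), 1) dw ≤ C (μn)^{1-τ} x_1 x_2^{τ-2}`. -/
theorem stmt18 (τ : ℝ) (hτ2 : 2 < τ) (hτ3 : τ < 3) (k : ℕ) (hk : 2 ≤ k) :
    ∃ C : ℝ, 0 < C ∧ ∀ (n : ℕ) (μ : ℝ), 0 < n → 0 < μ →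
      ∀ x : Fin k → ℝ, (∀ i, 1 ≤ x i) → Monotone x →
        (∫ w in Set.Ioi (1 : ℝ), w ^ (-τ) * ∏ i, min (w * x i / (μ * n)) 1) ≤
          C * (μ * n) ^ (1 - τ) * x ⟨0, by omega⟩ * (x ⟨1, by omega⟩) ^ (τ - 2) := by
  have h32 : (0:ℝ) < 3 - τ := by linarith
  have h2t : (0:ℝ) < τ - 2 := by linarith
  refine ⟨1 / (3 - τ) + 1 / (τ - 2), by positivity, ?_⟩
  intro n μ hn hμ x hx hmono
  set C : ℝ := 1 / (3 - τ) + 1 / (τ - 2) with hC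
  have hCpos : 0 < C := by positivity
  have hn' : (0:ℝ) < (n:ℝ) := by exact_mod_cast hn
  set A : ℝ := μ * n with hA
  have hApos : 0 < A := mul_pos hμ hn'
  set i0 : Fin k := ⟨0, by omega⟩ with hi0
  set i1 : Fin k := ⟨1, by omega⟩ with hi1
  set x0 : ℝ := x i0 with hx0
  set x1 : ℝ := x i1 with hx1
  have hx0pos : 0 < x0 := lt_of_lt_of_le one_pos (hx i0)
  have hx1pos : 0 < x1 := lt_of_lt_of_le one_pos (hx i1)
  have hx01 : x0 ≤ x1 := hmono (by simp [hi0, hi1, Fin.mk_le_mk])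
  set q : ℝ := x1 / A with hq
  have hqpos : 0 < q := div_pos hx1pos hApos
  -- pointwise bound
  have hne : i0 ≠ i1 := by simp [hi0, hi1, Fin.ext_iff]
  have hfg : ∀ w ∈ Set.Ioi (1:ℝ),
      w ^ (-τ) * ∏ i, min (w * x i / A) 1
        ≤ (x0 / A) * (w ^ (1 - τ) * min (w * q) 1) := by
    intro w hw
    have hw0 : 0 < w := lt_trans one_pos hw
    have hmin0 : ∀ i, 0 ≤ min (w * x i / A) 1 := fun i =>
      le_min (div_nonneg (mul_nonneg hw0.le (le_trans zero_le_one (hx i))) hApos.le)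
        zero_le_one
    have hmin1 : ∀ i, min (w * x i / A) 1 ≤ 1 := fun i => min_le_right _ _
    have hprod : (∏ i, min (w * x i / A) 1)
        ≤ min (w * x0 / A) 1 * min (w * x1 / A) 1 := by
      have hsub : ({i0, i1} : Finset (Fin k)) ⊆ Finset.univ := Finset.subset_univ _
      calc (∏ i, min (w * x i / A) 1)
          = (∏ i ∈ Finset.univ \ {i0, i1}, min (w * x i / A) 1)
            * ∏ i ∈ ({i0, i1} : Finset (Fin k)), min (w * x i / A) 1 :=
            (Finset.prod_sdiff hsub).symm
        _ ≤ 1 * ∏ i ∈ ({i0, i1} : Finset (Fin k)), min (w * x i / A) 1 := by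
            apply mul_le_mul_of_nonneg_right
            · exact Finset.prod_le_one (fun i _ => hmin0 i) (fun i _ => hmin1 i)
            · exact Finset.prod_nonneg (fun i _ => hmin0 i)
        _ = min (w * x0 / A) 1 * min (w * x1 / A) 1 := by
            rw [one_mul, Finset.prod_pair hne]
    have hq1 : min (w * x1 / A) 1 = min (w * q) 1 := by rw [hq, mul_div_assoc]
    have hpow : w ^ (1 - τ) = w ^ (-τ) * w := by
      rw [show (1 - τ) = -τ + 1 by ring, Real.rpow_add hw0, Real.rpow_one]
    have hwnn : 0 ≤ w ^ (-τ) := Real.rpow_nonneg hw0.le _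
    calc w ^ (-τ) * ∏ i, min (w * x i / A) 1
        ≤ w ^ (-τ) * (min (w * x0 / A) 1 * min (w * x1 / A) 1) :=
          mul_le_mul_of_nonneg_left hprod hwnn
      _ ≤ w ^ (-τ) * ((w * x0 / A) * min (w * x1 / A) 1) := by
          apply mul_le_mul_of_nonneg_left _ hwnn
          exact mul_le_mul_of_nonneg_right (min_le_left _ _) (hmin0 i1)
      _ = (x0 / A) * (w ^ (1 - τ) * min (w * q) 1) := by
          rw [hq1, hpow]; ring
  have hgint : IntegrableOn
      (fun w : ℝ => (x0 / A) * (w ^ (1 - τ) * min (w * q) 1)) (Set.Ioi 1) :=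
    (auxInt τ hτ2 q hqpos.le 1 one_pos).const_mul _
  have hstep1 : (∫ w in Set.Ioi (1:ℝ), w ^ (-τ) * ∏ i, min (w * x i / A) 1)
      ≤ ∫ w in Set.Ioi (1:ℝ), (x0 / A) * (w ^ (1 - τ) * min (w * q) 1) := by
    refine integral_mono_of_nonneg ?_ hgint ?_
    · filter_upwards [ae_restrict_mem measurableSet_Ioi] with w hw
      have hw0 : 0 < w := lt_trans one_pos hw
      have : ∀ i, 0 ≤ min (w * x i / A) 1 := fun i =>
        le_min (div_nonneg (mul_nonneg hw0.le (le_trans zero_le_one (hx i))) hApos.le)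
          zero_le_one
      exact mul_nonneg (Real.rpow_nonneg hw0.le _) (Finset.prod_nonneg fun i _ => this i)
    · filter_upwards [ae_restrict_mem measurableSet_Ioi] with w hw
      exact hfg w hw
  have hstep2 : (∫ w in Set.Ioi (1:ℝ), (x0 / A) * (w ^ (1 - τ) * min (w * q) 1))
      = (x0 / A) * ∫ w in Set.Ioi (1:ℝ), w ^ (1 - τ) * min (w * q) 1 :=
    integral_const_mul _ _
  have hstep3 := auxJ τ hτ2 hτ3 q hqpos
  have hfinal : (x0 / A) * (C * q ^ (τ - 2)) = C * A ^ (1 - τ) * x0 * x1 ^ (τ - 2) := by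
    have hdiv : q ^ (τ - 2) = x1 ^ (τ - 2) / A ^ (τ - 2) :=
      Real.div_rpow hx1pos.le hApos.le _
    have hAeq : A ^ (1 - τ) = (A ^ (τ - 2))⁻¹ * A⁻¹ := by
      rw [← Real.rpow_neg hApos.le, ← Real.rpow_neg_one A, ← Real.rpow_add hApos]
      congr 1; ring
    rw [hdiv, hAeq]
    have : A ^ (τ - 2) ≠ 0 := (Real.rpow_pos_of_pos hApos _).ne'
    field_simp
  calc (∫ w in Set.Ioi (1:ℝ), w ^ (-τ) * ∏ i, min (w * x i / (μ * n)) 1)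
      ≤ (x0 / A) * ∫ w in Set.Ioi (1:ℝ), w ^ (1 - τ) * min (w * q) 1 := by
        rw [← hstep2]; exact hstep1
    _ ≤ (x0 / A) * (C * q ^ (τ - 2)) := by
        apply mul_le_mul_of_nonneg_left hstep3 (by positivity)
    _ = C * A ^ (1 - τ) * x0 * x1 ^ (τ - 2) := hfinal
end

section
/- For τ ∈ (2,3) and k ≥ 3, the integral ∫_0^1...∫_0^1 x_3^{1-τ}...x_k^{1-τ} ∫_0^∞ ∫_{x_1}^∞ x_1^{k-1-τ} x_2^{1-τ} ∏_{i=3}^k min(x_2 x_i, 1) e^{-μ^{1-τ} x_1 x_2^{τ-2}} dx_2 dx_1 dx_3 ... dx_k is finite. -/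
open MeasureTheory Finset Set
open scoped ENNReal



lemma minlem {a b θ : ℝ} (ha : 0 < a) (hb0 : 0 < b) (hb1 : b ≤ 1)
    (hθ0 : 0 ≤ θ) (hθ1 : θ ≤ 1) : min (a * b) 1 ≤ min a (a ^ θ) * b ^ θ := by
  have hbθ : b ≤ b ^ θ := by
    calc b = b ^ (1:ℝ) := (Real.rpow_one b).symm
    _ ≤ b ^ θ := Real.rpow_le_rpow_of_exponent_ge hb0 hb1 hθ1
  rcases le_or_gt a 1 with h | h
  · have h1 : min a (a ^ θ) = a := by
      refine min_eq_left ?_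
      calc a = a ^ (1:ℝ) := (Real.rpow_one a).symm
      _ ≤ a ^ θ := Real.rpow_le_rpow_of_exponent_ge ha h hθ1
    rw [h1]
    calc min (a*b) 1 ≤ a * b := min_le_left _ _
    _ ≤ a * b ^ θ := mul_le_mul_of_nonneg_left hbθ ha.le
  · have h1 : min a (a ^ θ) = a ^ θ := by
      refine min_eq_right ?_
      calc a ^ θ ≤ a ^ (1:ℝ) := Real.rpow_le_rpow_of_exponent_le h.le hθ1
      _ = a := Real.rpow_one a
    rw [h1, ← Real.mul_rpow ha.le hb0.le]
    rcases le_or_gt (a*b) 1 with h2 | h2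
    · calc min (a*b) 1 = a*b := min_eq_left h2
      _ = (a*b) ^ (1:ℝ) := (Real.rpow_one _).symm
      _ ≤ (a*b) ^ θ := Real.rpow_le_rpow_of_exponent_ge (by positivity) h2 hθ1
    · calc min (a*b) 1 = 1 := min_eq_right h2.le
      _ ≤ (a*b) ^ θ := Real.one_le_rpow h2.le hθ0

lemma filter_prod_eq {M : Type*} [CommMonoid M] (n : ℕ) (f : Fin (n+2) → M) :
    ∏ i ∈ Finset.univ.filter (fun i : Fin (n+2) => 2 ≤ (i : ℕ)), f i
      = ∏ j : Fin n, f j.succ.succ := by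
  refine Finset.prod_bij' (fun i hi => (⟨(i:ℕ) - 2, by
      simp only [Finset.mem_filter, Finset.mem_univ, true_and] at hi
      have h1 := i.isLt; omega⟩ : Fin n))
    (fun j _ => j.succ.succ) ?_ ?_ ?_ ?_ ?_
  · intro i hi; exact Finset.mem_univ _
  · intro j hj
    simp only [Finset.mem_filter, Finset.mem_univ, true_and, Fin.val_succ]
    omega
  · intro i hi
    simp only [Finset.mem_filter, Finset.mem_univ, true_and] at hi
    ext
    simp only [Fin.val_succ]
    omega
  · intro j hj
    ext
    simp only [Fin.val_succ]
    omega
  · intro i hi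
    congr 1
    simp only [Finset.mem_filter, Finset.mem_univ, true_and] at hi
    ext
    simp only [Fin.val_succ]
    omega

lemma lint_pi_fin (g : ℝ → ℝ≥0∞) (hg : Measurable g) :
    ∀ n, ∫⁻ z : Fin n → ℝ, ∏ j, g (z j) = (∫⁻ t, g t) ^ n := by
  intro n
  induction n with
  | zero =>
      simp only [Finset.univ_eq_empty, Finset.prod_empty, pow_zero]
      rw [lintegral_one, MeasureTheory.volume_pi, Measure.pi_univ]
      simp
  | succ m ih =>
      have mp := volume_preserving_piFinSuccAbove (fun _ : Fin (m+1) => ℝ) 0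
      have h2 : Measurable (fun y : Fin m → ℝ => ∏ j, g (y j)) :=
        Finset.measurable_prod _ fun j _ => hg.comp (measurable_pi_apply j)
      have hF : Measurable (fun p : ℝ × (Fin m → ℝ) => g p.1 * ∏ j, g (p.2 j)) :=
        (hg.comp measurable_fst).mul (h2.comp measurable_snd)
      calc ∫⁻ z : Fin (m+1) → ℝ, ∏ j, g (z j)
          = ∫⁻ z : Fin (m+1) → ℝ,
              (fun p : ℝ × (Fin m → ℝ) => g p.1 * ∏ j, g (p.2 j))
                ((MeasurableEquiv.piFinSuccAbove (fun _ => ℝ) 0) z) := by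
            refine lintegral_congr fun z => ?_
            simp [MeasurableEquiv.piFinSuccAbove_apply, Fin.prod_univ_succ, Fin.removeNth,
              Fin.tail]
        _ = ∫⁻ p : ℝ × (Fin m → ℝ), g p.1 * ∏ j, g (p.2 j) := mp.lintegral_comp hF
        _ = (∫⁻ t, g t) * (∫⁻ t, g t) ^ m := by
            rw [Measure.volume_eq_prod,
              lintegral_prod_mul (f := g) (g := fun y : Fin m → ℝ => ∏ j, g (y j))
                hg.aemeasurable h2.aemeasurable, ih]
        _ = (∫⁻ t, g t) ^ (m+1) := (pow_succ' _ _).symm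



lemma inner_bound {q r : ℝ} (hq : -1 < q) (hr : 0 < r) :
    ∫⁻ a in Ioi (0:ℝ), ENNReal.ofReal (a ^ q * Real.exp (-(r * a)))
      ≤ ENNReal.ofReal (Real.Gamma (q+1) * r ^ (-(q+1))) := by
  have hq1 : 0 < q + 1 := by linarith
  have hΓ : 0 < Real.Gamma (q+1) := Real.Gamma_pos_of_pos hq1
  have hrp : 0 < r ^ (q+1) := Real.rpow_pos_of_pos hr _
  set C : ℝ := r ^ (q+1) / Real.Gamma (q+1) with hC
  have hCpos : 0 < C := by positivity
  have key : ∫⁻ a in Ioi (0:ℝ), ProbabilityTheory.gammaPDF (q+1) r a ≤ 1 := by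
    rw [← ProbabilityTheory.lintegral_gammaPDF_eq_one hq1 hr]
    exact setLIntegral_le_lintegral _ _
  have congr1 : ∫⁻ a in Ioi (0:ℝ), ProbabilityTheory.gammaPDF (q+1) r a
      = ENNReal.ofReal C * ∫⁻ a in Ioi (0:ℝ), ENNReal.ofReal (a ^ q * Real.exp (-(r * a))) := by
    rw [← lintegral_const_mul _ (by fun_prop : Measurable fun a : ℝ =>
      ENNReal.ofReal (a ^ q * Real.exp (-(r * a))))]
    refine setLIntegral_congr_fun measurableSet_Ioi (fun a ha => ?_)
    rw [ProbabilityTheory.gammaPDF_of_nonneg (le_of_lt ha), ← ENNReal.ofReal_mul hCpos.le]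
    congr 1
    have : q + 1 - 1 = q := by ring
    rw [this, hC]
    ring
  have h2 : ENNReal.ofReal C * ∫⁻ a in Ioi (0:ℝ), ENNReal.ofReal (a ^ q * Real.exp (-(r * a))) ≤ 1 := by
    rw [← congr1]; exact key
  have h3 : (∫⁻ a in Ioi (0:ℝ), ENNReal.ofReal (a ^ q * Real.exp (-(r * a))))
      ≤ (ENNReal.ofReal C)⁻¹ := by
    rw [ENNReal.le_inv_iff_mul_le, mul_comm]
    exact h2
  refine h3.trans (le_of_eq ?_)
  rw [← ENNReal.ofReal_inv_of_pos hCpos]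
  congr 1
  rw [hC, Real.rpow_neg hr.le]
  field_simp
lemma fin_Ioc01 {p : ℝ} (hp : -1 < p) :
    ∫⁻ b in Ioc (0:ℝ) 1, ENNReal.ofReal (b ^ p) ≠ ⊤ := by
  have hsub : Ioc (0:ℝ) 1 ⊆ Ioo (0:ℝ) 2 := fun x hx => ⟨hx.1, by linarith [hx.2]⟩
  have hint : IntegrableOn (fun x : ℝ => x ^ p) (Ioo 0 2) :=
    (intervalIntegral.integrableOn_Ioo_rpow_iff two_pos).mpr hp
  have hfin : ∫⁻ b in Ioo (0:ℝ) 2, ENNReal.ofReal (b ^ p) < ⊤ := by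
    have hnn : 0 ≤ᵐ[volume.restrict (Ioo (0:ℝ) 2)] fun x : ℝ => x ^ p := by
      filter_upwards [ae_restrict_mem measurableSet_Ioo] with x hx
      exact Real.rpow_nonneg hx.1.le _
    exact (hasFiniteIntegral_iff_ofReal hnn).mp hint.hasFiniteIntegral
  exact ne_top_of_le_ne_top hfin.ne (lintegral_mono_set hsub)

lemma fin_Ioi1 {p : ℝ} (hp : p < -1) :
    ∫⁻ b in Ioi (1:ℝ), ENNReal.ofReal (b ^ p) ≠ ⊤ := by
  have hint : IntegrableOn (fun x : ℝ => x ^ p) (Ioi 1) :=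
    (integrableOn_Ioi_rpow_iff one_pos).mpr hp
  have hnn : 0 ≤ᵐ[volume.restrict (Ioi (1:ℝ))] fun x : ℝ => x ^ p := by
    filter_upwards [ae_restrict_mem measurableSet_Ioi] with x hx
    exact Real.rpow_nonneg (by linarith [mem_Ioi.mp hx]) _
  exact ((hasFiniteIntegral_iff_ofReal hnn).mp hint.hasFiniteIntegral).ne

lemma fubini_two (n : ℕ) (Hp : ℝ × ℝ → ℝ≥0∞) (hHm : Measurable Hp)
    (g : ℝ → ℝ≥0∞) (hgm : Measurable g) :
    ∫⁻ x : Fin (n+2) → ℝ, Hp (x 0, x 1) * ∏ j : Fin n, g (x j.succ.succ)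
      = (∫⁻ p : ℝ × ℝ, Hp p) * (∫⁻ t, g t) ^ n := by
  have h2 : Measurable fun y : Fin n → ℝ => ∏ j, g (y j) :=
    Finset.measurable_prod _ fun j _ => hgm.comp (measurable_pi_apply j)
  have inner : ∀ a : ℝ, ∫⁻ y : Fin (n+1) → ℝ, Hp (a, y 0) * ∏ j : Fin n, g (y j.succ)
      = (∫⁻ b, Hp (a, b)) * (∫⁻ t, g t) ^ n := by
    intro a
    have mp := volume_preserving_piFinSuccAbove (fun _ : Fin (n+1) => ℝ) 0
    have hFa : Measurable (fun q : ℝ × (Fin n → ℝ) => Hp (a, q.1) * ∏ j, g (q.2 j)) :=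
      (hHm.comp (measurable_const.prodMk measurable_fst)).mul (h2.comp measurable_snd)
    calc ∫⁻ y : Fin (n+1) → ℝ, Hp (a, y 0) * ∏ j : Fin n, g (y j.succ)
        = ∫⁻ y : Fin (n+1) → ℝ, (fun q : ℝ × (Fin n → ℝ) => Hp (a, q.1) * ∏ j, g (q.2 j))
            ((MeasurableEquiv.piFinSuccAbove (fun _ => ℝ) 0) y) := by
          refine lintegral_congr fun y => ?_
          simp [MeasurableEquiv.piFinSuccAbove_apply, Fin.removeNth, Fin.tail]
      _ = ∫⁻ q : ℝ × (Fin n → ℝ), Hp (a, q.1) * ∏ j, g (q.2 j) := mp.lintegral_comp hFa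
      _ = (∫⁻ b, Hp (a, b)) * ∫⁻ z : Fin n → ℝ, ∏ j, g (z j) := by
          rw [Measure.volume_eq_prod, lintegral_prod_mul (f := fun b => Hp (a, b))
            (g := fun z : Fin n → ℝ => ∏ j, g (z j))
            (hHm.comp (measurable_const.prodMk measurable_id)).aemeasurable h2.aemeasurable]
      _ = (∫⁻ b, Hp (a, b)) * (∫⁻ t, g t) ^ n := by rw [lint_pi_fin g hgm n]
  have mp2 := volume_preserving_piFinSuccAbove (fun _ : Fin (n+2) => ℝ) 0
  have hF1 : Measurable (fun p : ℝ × (Fin (n+1) → ℝ) =>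
      Hp (p.1, p.2 0) * ∏ j : Fin n, g (p.2 j.succ)) := by
    apply Measurable.mul
    · exact hHm.comp (measurable_fst.prodMk ((measurable_pi_apply 0).comp measurable_snd))
    · exact Finset.measurable_prod _ fun j _ =>
        hgm.comp ((measurable_pi_apply j.succ).comp measurable_snd)
  calc ∫⁻ x : Fin (n+2) → ℝ, Hp (x 0, x 1) * ∏ j : Fin n, g (x j.succ.succ)
      = ∫⁻ x : Fin (n+2) → ℝ, (fun p : ℝ × (Fin (n+1) → ℝ) =>
          Hp (p.1, p.2 0) * ∏ j : Fin n, g (p.2 j.succ))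
          ((MeasurableEquiv.piFinSuccAbove (fun _ => ℝ) 0) x) := by
        refine lintegral_congr fun x => ?_
        simp [MeasurableEquiv.piFinSuccAbove_apply, Fin.removeNth, Fin.tail,
          Fin.succ_zero_eq_one]
    _ = ∫⁻ p : ℝ × (Fin (n+1) → ℝ), Hp (p.1, p.2 0) * ∏ j : Fin n, g (p.2 j.succ) :=
        mp2.lintegral_comp hF1
    _ = ∫⁻ a, ∫⁻ y : Fin (n+1) → ℝ, Hp (a, y 0) * ∏ j : Fin n, g (y j.succ) := by
        rw [Measure.volume_eq_prod, lintegral_prod _ hF1.aemeasurable]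
    _ = ∫⁻ a, (∫⁻ b, Hp (a, b)) * (∫⁻ t, g t) ^ n := by simp_rw [inner]
    _ = (∫⁻ a, ∫⁻ b, Hp (a, b)) * (∫⁻ t, g t) ^ n := by
        rw [lintegral_mul_const _ hHm.lintegral_prod_right']
    _ = (∫⁻ p : ℝ × ℝ, Hp p) * (∫⁻ t, g t) ^ n := by
        rw [Measure.volume_eq_prod, lintegral_prod _ hHm.aemeasurable]

/-- For `τ ∈ (2,3)`, `μ > 0` and `k ≥ 3`, the integral
`∫_0^1…∫_0^1 x_3^{1-τ}⋯x_k^{1-τ} ∫_0^∞ ∫_{x_1}^∞ x_1^{k-1-τ} x_2^{1-τ}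
∏_{i=3}^k min(x_2 x_i, 1) e^{-μ^{1-τ} x_1 x_2^{τ-2}} dx_2 dx_1 dx_3 ⋯ dx_k`
is finite. (Coordinates: `x 0, x 1` are the paper's `x_1, x_2`; coordinates with
index `≥ 2` are the paper's `x_3, …, x_k` ranging over `(0,1)`.) -/
theorem stmt19 (τ μ : ℝ) (hτ2 : 2 < τ) (hτ3 : τ < 3) (hμ : 0 < μ)
    (k : ℕ) (hk : 3 ≤ k) :
    (∫⁻ x in {x : Fin k → ℝ | 0 < x ⟨0, by omega⟩ ∧ x ⟨0, by omega⟩ < x ⟨1, by omega⟩ ∧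
        ∀ i : Fin k, 2 ≤ (i : ℕ) → x i ∈ Set.Ioo (0 : ℝ) 1},
      ENNReal.ofReal ((x ⟨0, by omega⟩) ^ ((k : ℝ) - 1 - τ) * (x ⟨1, by omega⟩) ^ (1 - τ) *
        (∏ i ∈ Finset.univ.filter fun i : Fin k => 2 ≤ (i : ℕ),
          (x i) ^ (1 - τ) * min (x ⟨1, by omega⟩ * x i) 1) *
        Real.exp (-(μ ^ (1 - τ)) * x ⟨0, by omega⟩ * (x ⟨1, by omega⟩) ^ (τ - 2)))) ≠ ⊤ := by
  obtain ⟨n, rfl⟩ : ∃ n, k = n + 2 := ⟨k - 2, by omega⟩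
  have hn : 1 ≤ n := by omega
  have hn' : (1:ℝ) ≤ (n:ℝ) := by exact_mod_cast hn
  have e0 : (⟨0, by omega⟩ : Fin (n+2)) = 0 := by ext; simp
  have e1 : (⟨1, by omega⟩ : Fin (n+2)) = 1 := by ext; simp
  simp only [e0, e1]
  -- constants
  set θ : ℝ := (τ - 2) + (τ - 2) * (3 - τ) / (2 * n) with hθ_def
  have hd : 0 < (τ - 2) * (3 - τ) / (2 * (n:ℝ)) :=
    div_pos (mul_pos (by linarith) (by linarith)) (by positivity)
  have hθl : τ - 2 < θ := by rw [hθ_def]; linarith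
  have hθ0 : 0 ≤ θ := by linarith
  have hθ1 : θ < 1 := by
    have h2 : (τ - 2) * (3 - τ) / (2 * (n:ℝ)) < 3 - τ := by
      rw [div_lt_iff₀ (by positivity)]
      nlinarith [mul_pos (by linarith : (0:ℝ) < 3 - τ) (by linarith : (0:ℝ) < 2 * (n:ℝ) - (τ - 2))]
    rw [hθ_def]; linarith
  set K : ℝ := (n:ℝ) + 2 - τ with hK_def
  have hK0 : 0 < K := by rw [hK_def]; linarith
  have hK1 : -1 < K - 1 := by linarith
  set p0 : ℝ := 1 - τ + n - (τ - 2) * K with hp0_def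
  have hp0 : -1 < p0 := by
    have hid : p0 = -1 + ((n:ℝ) - (τ - 2)) * (1 - (τ - 2)) := by
      rw [hp0_def, hK_def]; ring
    nlinarith [mul_pos (by linarith : (0:ℝ) < (n:ℝ) - (τ - 2))
      (by linarith : (0:ℝ) < 1 - (τ - 2))]
  set pI : ℝ := 1 - τ + n * θ - (τ - 2) * K with hpI_def
  have hpI : pI < -1 := by
    have hid : pI = -1 - (τ - 2) * (1 - (τ - 2)) / 2 := by
      rw [hpI_def, hθ_def, hK_def]
      field_simp
      ring
    rw [hid]
    have : 0 < (τ - 2) * (1 - (τ - 2)) / 2 :=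
      div_pos (mul_pos (by linarith) (by linarith)) two_pos
    linarith
  clear_value θ K p0 pI
  -- the dominating kernels
  set Hp : ℝ × ℝ → ℝ≥0∞ := fun p => ((Ioi (0:ℝ)) ×ˢ (Ioi (0:ℝ))).indicator
      (fun p => ENNReal.ofReal (p.1 ^ (K - 1) *
        Real.exp (-(μ ^ (1 - τ) * p.2 ^ (τ - 2) * p.1)) *
        (p.2 ^ (1 - τ) * (min p.2 (p.2 ^ θ)) ^ n))) p with hHp_def
  have hHm : Measurable Hp := by
    rw [hHp_def]
    exact Measurable.indicator (by fun_prop) (measurableSet_Ioi.prod measurableSet_Ioi)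
  set g : ℝ → ℝ≥0∞ := fun t => (Ioo (0:ℝ) 1).indicator
      (fun t => ENNReal.ofReal (t ^ (1 - τ + θ))) t with hg_def
  have hgm : Measurable g := by
    rw [hg_def]
    exact Measurable.indicator (by fun_prop) measurableSet_Ioo
  -- measurability of the domain
  have hS : MeasurableSet {x : Fin (n+2) → ℝ | 0 < x 0 ∧ x 0 < x 1 ∧
      ∀ i : Fin (n+2), 2 ≤ (i : ℕ) → x i ∈ Set.Ioo (0:ℝ) 1} := by
    have : {x : Fin (n+2) → ℝ | 0 < x 0 ∧ x 0 < x 1 ∧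
        ∀ i : Fin (n+2), 2 ≤ (i : ℕ) → x i ∈ Set.Ioo (0:ℝ) 1}
        = ({x : Fin (n+2) → ℝ | 0 < x 0} ∩ {x : Fin (n+2) → ℝ | x 0 < x 1}) ∩
          ⋂ (i : Fin (n+2)), ⋂ (_ : 2 ≤ (i : ℕ)), (fun x : Fin (n+2) → ℝ => x i) ⁻¹' Ioo 0 1 := by
      ext x; simp [Set.mem_iInter, and_assoc]
    rw [this]
    refine MeasurableSet.inter (MeasurableSet.inter ?_ ?_) ?_
    · exact measurableSet_lt measurable_const (measurable_pi_apply 0)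
    · exact measurableSet_lt (measurable_pi_apply 0) (measurable_pi_apply 1)
    · exact MeasurableSet.iInter fun i => MeasurableSet.iInter fun _ =>
        (measurable_pi_apply i) measurableSet_Ioo
  rw [← lintegral_indicator hS]
  refine ne_top_of_le_ne_top ?_ (lintegral_mono
    (g := fun x => Hp (x 0, x 1) * ∏ j : Fin n, g (x j.succ.succ)) ?_)
  · -- finiteness of the dominating integral
    rw [fubini_two n Hp hHm g hgm]
    refine ENNReal.mul_ne_top ?_ (ENNReal.pow_ne_top ?_)
    · -- the 2D integral
      rw [Measure.volume_eq_prod, lintegral_prod_symm Hp hHm.aemeasurable]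
      have hinner : ∀ b : ℝ, (∫⁻ a, Hp (a, b)) ≤ (Ioi (0:ℝ)).indicator (fun b =>
          ENNReal.ofReal ((Real.Gamma K * (μ ^ (1 - τ) * b ^ (τ - 2)) ^ (-K)) *
            (b ^ (1 - τ) * (min b (b ^ θ)) ^ n))) b := by
        intro b
        by_cases hb : 0 < b
        · rw [Set.indicator_of_mem (Set.mem_Ioi.mpr hb)]
          have hr : 0 < μ ^ (1 - τ) * b ^ (τ - 2) :=
            mul_pos (Real.rpow_pos_of_pos hμ _) (Real.rpow_pos_of_pos hb _)
          have hptw : ∀ a : ℝ, Hp (a, b) = (Ioi (0:ℝ)).indicator (fun a =>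
              ENNReal.ofReal (a ^ (K - 1) *
                Real.exp (-(μ ^ (1 - τ) * b ^ (τ - 2) * a)))) a *
              ENNReal.ofReal (b ^ (1 - τ) * (min b (b ^ θ)) ^ n) := by
            intro a
            by_cases ha : 0 < a
            · rw [hHp_def]
              simp only
              rw [Set.indicator_of_mem (show ((a, b) : ℝ × ℝ) ∈ Ioi (0:ℝ) ×ˢ Ioi (0:ℝ) from
                ⟨ha, hb⟩), Set.indicator_of_mem (Set.mem_Ioi.mpr ha),
                ← ENNReal.ofReal_mul (by positivity)]
            · rw [hHp_def]
              simp only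
              rw [Set.indicator_of_notMem (show ((a, b) : ℝ × ℝ) ∉ Ioi (0:ℝ) ×ˢ Ioi (0:ℝ) from
                fun h => ha h.1), Set.indicator_of_notMem (show a ∉ Set.Ioi (0:ℝ) from fun h => ha h), zero_mul]
          simp_rw [hptw]
          rw [lintegral_mul_const _ (Measurable.indicator (by fun_prop) measurableSet_Ioi),
            lintegral_indicator measurableSet_Ioi]
          have hib := inner_bound (q := K - 1) (r := μ ^ (1 - τ) * b ^ (τ - 2)) hK1 hr
          rw [show K - 1 + 1 = K by ring] at hib
          calc (∫⁻ a in Ioi (0:ℝ), ENNReal.ofReal (a ^ (K - 1) *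
                Real.exp (-(μ ^ (1 - τ) * b ^ (τ - 2) * a)))) *
                ENNReal.ofReal (b ^ (1 - τ) * (min b (b ^ θ)) ^ n)
              ≤ ENNReal.ofReal (Real.Gamma K * (μ ^ (1 - τ) * b ^ (τ - 2)) ^ (-K)) *
                ENNReal.ofReal (b ^ (1 - τ) * (min b (b ^ θ)) ^ n) :=
                mul_le_mul_left hib _
            _ = ENNReal.ofReal ((Real.Gamma K * (μ ^ (1 - τ) * b ^ (τ - 2)) ^ (-K)) *
                (b ^ (1 - τ) * (min b (b ^ θ)) ^ n)) := by
                rw [← ENNReal.ofReal_mul (by positivity)]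
        · rw [Set.indicator_of_notMem (by simpa using hb)]
          have hz : ∀ a : ℝ, Hp (a, b) = 0 := by
            intro a
            rw [hHp_def]
            simp only
            rw [Set.indicator_of_notMem (fun h => hb h.2)]
          simp [hz]
      refine ne_top_of_le_ne_top ?_ (lintegral_mono hinner)
      rw [lintegral_indicator measurableSet_Ioi,
        ← Ioc_union_Ioi_eq_Ioi (zero_le_one (α := ℝ)),
        lintegral_union measurableSet_Ioi (Ioc_disjoint_Ioi le_rfl)]
      refine ENNReal.add_ne_top.mpr ⟨?_, ?_⟩
      · -- small b
        have hcongr : ∀ b ∈ Ioc (0:ℝ) 1,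
            ENNReal.ofReal ((Real.Gamma K * (μ ^ (1 - τ) * b ^ (τ - 2)) ^ (-K)) *
              (b ^ (1 - τ) * (min b (b ^ θ)) ^ n))
            = ENNReal.ofReal (Real.Gamma K * (μ ^ (1 - τ)) ^ (-K)) *
              ENNReal.ofReal (b ^ p0) := by
          intro b hb
          rw [← ENNReal.ofReal_mul (by positivity)]
          congr 1
          have hmin : min b (b ^ θ) = b := by
            refine min_eq_left ?_
            calc b = b ^ (1:ℝ) := (Real.rpow_one b).symm
            _ ≤ b ^ θ := Real.rpow_le_rpow_of_exponent_ge hb.1 hb.2 hθ1.le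
          rw [hmin, ← Real.rpow_natCast b n,
            Real.mul_rpow (Real.rpow_nonneg hμ.le _) (Real.rpow_nonneg hb.1.le _),
            ← Real.rpow_mul hb.1.le,
            show p0 = (τ - 2) * -K + (1 - τ) + (n:ℝ) by rw [hp0_def]; ring,
            Real.rpow_add hb.1, Real.rpow_add hb.1]
          ring
        rw [setLIntegral_congr_fun measurableSet_Ioc hcongr,
          lintegral_const_mul _ (by fun_prop)]
        exact ENNReal.mul_ne_top ENNReal.ofReal_ne_top (fin_Ioc01 hp0)
      · -- large b
        have hcongr : ∀ b ∈ Ioi (1:ℝ),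
            ENNReal.ofReal ((Real.Gamma K * (μ ^ (1 - τ) * b ^ (τ - 2)) ^ (-K)) *
              (b ^ (1 - τ) * (min b (b ^ θ)) ^ n))
            = ENNReal.ofReal (Real.Gamma K * (μ ^ (1 - τ)) ^ (-K)) *
              ENNReal.ofReal (b ^ pI) := by
          intro b hb
          have hb1 : (1:ℝ) ≤ b := (Set.mem_Ioi.mp hb).le
          have hb0 : (0:ℝ) < b := lt_of_lt_of_le one_pos hb1
          rw [← ENNReal.ofReal_mul (by positivity)]
          congr 1
          have hmin : min b (b ^ θ) = b ^ θ := by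
            refine min_eq_right ?_
            calc b ^ θ ≤ b ^ (1:ℝ) := Real.rpow_le_rpow_of_exponent_le hb1 hθ1.le
            _ = b := Real.rpow_one b
          rw [hmin, ← Real.rpow_natCast (b ^ θ) n, ← Real.rpow_mul hb0.le,
            Real.mul_rpow (Real.rpow_nonneg hμ.le _) (Real.rpow_nonneg hb0.le _),
            ← Real.rpow_mul hb0.le,
            show pI = (τ - 2) * -K + (1 - τ) + θ * (n:ℝ) by rw [hpI_def]; ring,
            Real.rpow_add hb0, Real.rpow_add hb0]
          ring
        rw [setLIntegral_congr_fun measurableSet_Ioi hcongr,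
          lintegral_const_mul _ (by fun_prop)]
        exact ENNReal.mul_ne_top ENNReal.ofReal_ne_top (fin_Ioi1 hpI)
    · -- the 1D integral
      rw [hg_def, lintegral_indicator measurableSet_Ioo]
      refine ne_top_of_le_ne_top (fin_Ioc01 (by linarith : (-1:ℝ) < 1 - τ + θ)) ?_
      exact lintegral_mono_set Ioo_subset_Ioc_self
  · -- pointwise domination
    intro x
    by_cases hx : x ∈ {x : Fin (n+2) → ℝ | 0 < x 0 ∧ x 0 < x 1 ∧
        ∀ i : Fin (n+2), 2 ≤ (i : ℕ) → x i ∈ Set.Ioo (0:ℝ) 1}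
    · rw [Set.indicator_of_mem hx]
      obtain ⟨hx0, hx01, hxi⟩ := hx
      have hb : 0 < x 1 := hx0.trans hx01
      have hxj : ∀ j : Fin n, x j.succ.succ ∈ Set.Ioo (0:ℝ) 1 := fun j => hxi _ (by
        simp only [Fin.val_succ]; omega)
      rw [hHp_def, hg_def]
      simp only
      rw [Set.indicator_of_mem (show ((x 0, x 1) : ℝ × ℝ) ∈ Ioi (0:ℝ) ×ˢ Ioi (0:ℝ) from
        ⟨hx0, hb⟩)]
      rw [Finset.prod_congr rfl (fun j _ => Set.indicator_of_mem (hxj j)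
        (fun t => ENNReal.ofReal (t ^ (1 - τ + θ))))]
      rw [← ENNReal.ofReal_prod_of_nonneg (fun j _ => Real.rpow_nonneg (hxj j).1.le _),
        ← ENNReal.ofReal_mul (by positivity)]
      apply ENNReal.ofReal_le_ofReal
      have hcast : ((n+2 : ℕ) : ℝ) - 1 - τ = K - 1 := by rw [hK_def]; push_cast; ring
      rw [hcast]
      rw [show Real.exp (-(μ ^ (1 - τ)) * x 0 * x 1 ^ (τ - 2))
        = Real.exp (-(μ ^ (1 - τ) * x 1 ^ (τ - 2) * x 0)) by ring_nf]
      set A : ℝ := x 0 ^ (K - 1) with hA_def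
      set E : ℝ := Real.exp (-(μ ^ (1 - τ) * x 1 ^ (τ - 2) * x 0)) with hE_def
      set Bb : ℝ := x 1 ^ (1 - τ) with hBb_def
      set M : ℝ := min (x 1) (x 1 ^ θ) with hM_def
      have hA : 0 ≤ A := Real.rpow_nonneg hx0.le _
      have hE : 0 ≤ E := (Real.exp_pos _).le
      have hBb : 0 ≤ Bb := Real.rpow_nonneg hb.le _
      have hM : 0 ≤ M := le_min hb.le (Real.rpow_nonneg hb.le _)
      have hprod : (∏ i ∈ Finset.univ.filter fun i : Fin (n+2) => 2 ≤ (i : ℕ),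
            x i ^ (1 - τ) * min (x 1 * x i) 1)
          ≤ M ^ n * ∏ j : Fin n, x j.succ.succ ^ (1 - τ + θ) := by
        rw [filter_prod_eq n (fun i => x i ^ (1 - τ) * min (x 1 * x i) 1),
          show M ^ n * ∏ j : Fin n, x j.succ.succ ^ (1 - τ + θ)
              = ∏ j : Fin n, (M * x j.succ.succ ^ (1 - τ + θ)) by
            rw [Finset.prod_mul_distrib, Finset.prod_const, Finset.card_univ,
              Fintype.card_fin]]
        refine Finset.prod_le_prod (fun j _ => mul_nonneg (Real.rpow_nonneg (hxj j).1.le _)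
          (le_min (mul_nonneg hb.le (hxj j).1.le) zero_le_one)) (fun j _ => ?_)
        have hj := hxj j
        have h1 : min (x 1 * x j.succ.succ) 1 ≤ M * x j.succ.succ ^ θ :=
          minlem hb hj.1 hj.2.le hθ0 hθ1.le
        calc x j.succ.succ ^ (1 - τ) * min (x 1 * x j.succ.succ) 1
            ≤ x j.succ.succ ^ (1 - τ) * (M * x j.succ.succ ^ θ) :=
              mul_le_mul_of_nonneg_left h1 (Real.rpow_nonneg hj.1.le _)
          _ = M * x j.succ.succ ^ (1 - τ + θ) := by rw [Real.rpow_add hj.1]; ring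
      calc A * Bb * (∏ i ∈ Finset.univ.filter fun i : Fin (n+2) => 2 ≤ (i : ℕ),
            x i ^ (1 - τ) * min (x 1 * x i) 1) * E
          ≤ A * Bb * (M ^ n * ∏ j : Fin n, x j.succ.succ ^ (1 - τ + θ)) * E := by
            refine mul_le_mul_of_nonneg_right (mul_le_mul_of_nonneg_left hprod
              (mul_nonneg hA hBb)) hE
        _ = A * E * (Bb * M ^ n) * ∏ j : Fin n, x j.succ.succ ^ (1 - τ + θ) := by ring
    · rw [Set.indicator_of_notMem hx]
      exact zero_le
end
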